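/- arXiv:1606.01261 — 6 statements merged into one kernel-verified Lean document; each statement's English description precedes it below -/
import Mathlib

section
/- Let X be a real normed vector space with continuous dual X*, let ξ1, ξ2 ∈ X*, let f : X → ℝ ∪ {+∞}, and let C > 0, κ > 0. Suppose x1, x2 ∈ X satisfy f(x1), f(x2) ∈ ℝ and, for i = 1, 2, f(x) ≥ f(x_i) + ⟨x − x_i, ξ_i⟩ + C·‖x − x_i‖^{1+κ} for all x ∈ X. Then ‖x1 − x2‖ ≤ (2C)^{−1/κ} · ‖ξ1 − ξ2‖_*^{1/κ}. In particular, with C = K/2 and κ = 1 (classical K-strong convexity), the map ξ ↦ x_ξ (the Fréchet gradient of the conjugate f*) is (1/K)-Lipschitz with respect to the dual norm. -/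
/-- **Hölder continuity of the gradient of the conjugate for power-type strong convexity.**
If `f : X → ℝ ∪ {+∞}` satisfies the uniform essential strong convexity inequality at
`x1, x2` with supporting functionals `ξ1, ξ2` and modulus `γ(r) = C r^{1+κ}` (`C, κ > 0`),
then `‖x1 - x2‖ ≤ (2C)^{-1/κ} ‖ξ1 - ξ2‖⋆^{1/κ}`. (With `C = K/2`, `κ = 1`, this is
`1/K`-Lipschitz continuity of the gradient `Df*` of the conjugate.) -/
theorem stmt1 {X : Type*} [NormedAddCommGroup X] [NormedSpace ℝ X]
    (f : X → EReal) (C κ : ℝ) (hC : 0 < C) (hκ : 0 < κ)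
    (ξ1 ξ2 : X →L[ℝ] ℝ) (x1 x2 : X) (a1 a2 : ℝ)
    (hf1 : f x1 = (a1 : EReal)) (hf2 : f x2 = (a2 : EReal))
    (h1 : ∀ x : X, ((a1 + ξ1 (x - x1) + C * ‖x - x1‖ ^ (1 + κ) : ℝ) : EReal) ≤ f x)
    (h2 : ∀ x : X, ((a2 + ξ2 (x - x2) + C * ‖x - x2‖ ^ (1 + κ) : ℝ) : EReal) ≤ f x) :
    ‖x1 - x2‖ ≤ (2 * C) ^ (-(1 / κ)) * ‖ξ1 - ξ2‖ ^ (1 / κ) := by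
  set d : ℝ := ‖x1 - x2‖ with hd
  have A : a1 + ξ1 (x2 - x1) + C * ‖x2 - x1‖ ^ (1 + κ) ≤ a2 := by
    have := h1 x2; rw [hf2] at this; exact_mod_cast this
  have B : a2 + ξ2 (x1 - x2) + C * ‖x1 - x2‖ ^ (1 + κ) ≤ a1 := by
    have := h2 x1; rw [hf1] at this; exact_mod_cast this
  have hrev : ‖x2 - x1‖ = d := norm_sub_rev x2 x1
  have hξ : ξ1 (x2 - x1) = -ξ1 (x1 - x2) := by
    rw [show x2 - x1 = -(x1 - x2) by abel, map_neg]
  have key : 2 * C * d ^ (1 + κ) ≤ (ξ1 - ξ2) (x1 - x2) := by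
    have := add_le_add A B
    rw [hrev, hξ] at this
    simp only [ContinuousLinearMap.sub_apply]
    nlinarith [this]
  have key2 : 2 * C * d ^ (1 + κ) ≤ ‖ξ1 - ξ2‖ * d := by
    refine key.trans ?_
    calc (ξ1 - ξ2) (x1 - x2) ≤ ‖(ξ1 - ξ2) (x1 - x2)‖ := le_abs_self _
      _ ≤ ‖ξ1 - ξ2‖ * d := (ξ1 - ξ2).le_opNorm _
  rcases eq_or_lt_of_le (norm_nonneg (x1 - x2)) with h0 | h0
  · rw [hd, ← h0]
    positivity
  · -- d > 0
    have hdpow : d ^ (1 + κ) = d * d ^ κ := by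
      rw [Real.rpow_add h0, Real.rpow_one]
    have key3 : 2 * C * d ^ κ ≤ ‖ξ1 - ξ2‖ := by
      have := key2
      rw [hdpow] at this
      have := (mul_le_mul_iff_of_pos_right h0).mp (by linarith [this] : (2 * C * d ^ κ) * d ≤ ‖ξ1 - ξ2‖ * d)
      exact this
    have h2C : (0:ℝ) < 2 * C := by linarith
    have hdκ : d ^ κ ≤ ‖ξ1 - ξ2‖ / (2 * C) := by
      rw [le_div_iff₀ h2C]; linarith [key3]
    have := Real.rpow_le_rpow (Real.rpow_nonneg h0.le κ) hdκ (by positivity : (0:ℝ) ≤ 1/κ)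
    rw [← Real.rpow_mul h0.le, mul_one_div, div_self hκ.ne', Real.rpow_one] at this
    calc d ≤ (‖ξ1 - ξ2‖ / (2 * C)) ^ (1/κ) := this
      _ = (2 * C) ^ (-(1 / κ)) * ‖ξ1 - ξ2‖ ^ (1 / κ) := by
        rw [Real.div_rpow (norm_nonneg _) h2C.le, Real.rpow_neg h2C.le, div_eq_mul_inv, mul_comm]
end

section
/- (Dual Averaging regret bound.) In the Dual Averaging setting: let h be a regularizer on 𝒳 that is uniformly essentially strongly convex with modulus γ, where γ̃(r) := γ(r)/r (r > 0) is a strictly increasing bijection of (0,∞) onto (0,∞) with inverse γ̃⁻¹ extended by γ̃⁻¹(0) = 0. Let (η_t)_{t≥1} be a positive nonincreasing sequence with η_0 := η_1, let (u_t)_{t≥1} be any sequence in X*, and let (x_t)_{t≥1} be the Dual Averaging iterates. Then for every t ≥ 1 and every x ∈ 𝒳: Σ_{τ=1}^t ⟨u_τ, x⟩ − Σ_{τ=1}^t ⟨u_τ, x_τ⟩ ≤ (h(x) − h̲)/η_t + Σ_{τ=1}^t ‖u_τ‖_* · γ̃⁻¹( (η_{τ−1}/2)·‖u_τ‖_* ).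 -/
set_option maxHeartbeats 1000000

open Finset

/-- **Dual Averaging regret bound** (Theorem: Dual Averaging Regret).
`h : X → ℝ ∪ {+∞}` is a regularizer, uniformly essentially strongly convex with modulus `γ`
(witnessed by the maximizer map `g : X* → X`, `g ξ ∈ 𝒳 = dom h`), `h̲ = inf h > -∞`,
`γ̃(r) = γ(r)/r` is a strictly increasing bijection of `(0,∞)` onto `(0,∞)` with inverse
`γinv` extended by `γinv 0 = 0`. For positive nonincreasing learning rates `(η_t)` with
`η_0 = η_1`, rewards `(u_t)` in `X*`, and Dual Averaging iterates
`x_t = g(η_{t-1} Σ_{τ=1}^{t-1} u_τ)`, the regret against any `x ∈ 𝒳` satisfies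
`Σ_{τ=1}^t ⟨u_τ, x⟩ - Σ_{τ=1}^t ⟨u_τ, x_τ⟩ ≤ (h(x) - h̲)/η_t
  + Σ_{τ=1}^t ‖u_τ‖⋆ γinv(η_{τ-1} ‖u_τ‖⋆ / 2)`. -/
theorem stmt2 {X : Type*} [NormedAddCommGroup X] [NormedSpace ℝ X]
    (h : X → EReal) (hproper : ∀ y : X, h y ≠ ⊥)
    (hbar : ℝ) (hbar_inf : (⨅ y : X, h y) = (hbar : EReal))
    (γ : ℝ → ℝ) (hγ0 : γ 0 = 0) (hγnn : ∀ r : ℝ, 0 ≤ r → 0 ≤ γ r)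
    -- `g ξ` is the point witnessing uniform essential strong convexity (the maximizer
    -- of `x ↦ ⟨x, ξ⟩ - h x`), lying in `𝒳 = dom h`:
    (g : (X →L[ℝ] ℝ) → X)
    (hgdom : ∀ ξ : X →L[ℝ] ℝ, h (g ξ) ≠ ⊤)
    (hconv : ∀ (ξ : X →L[ℝ] ℝ) (x : X),
      h (g ξ) + ((ξ (x - g ξ) + γ ‖x - g ξ‖ : ℝ) : EReal) ≤ h x)
    -- `γ̃(r) = γ(r)/r` is strictly increasing on `(0,∞)`, onto `(0,∞)`, with
    -- inverse `γinv` extended by `γinv 0 = 0`: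
    (γinv : ℝ → ℝ) (hγinv0 : γinv 0 = 0)
    (hmono : StrictMonoOn (fun r : ℝ => γ r / r) (Set.Ioi 0))
    (honto : ∀ s : ℝ, 0 < s → ∃ r : ℝ, 0 < r ∧ γ r / r = s)
    (hγinv : ∀ r : ℝ, 0 < r → γinv (γ r / r) = r)
    -- learning rates and rewards:
    (η : ℕ → ℝ) (hηpos : ∀ t, 0 < η t) (hηmono : ∀ s t, s ≤ t → η t ≤ η s)
    (hη0 : η 0 = η 1)
    (u : ℕ → X →L[ℝ] ℝ)
    -- the Dual Averaging iterates:
    (x : ℕ → X)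
    (hx : ∀ t : ℕ, 1 ≤ t → x t = g ((η (t - 1)) • (∑ τ ∈ Icc 1 (t - 1), u τ))) :
    ∀ (t : ℕ), 1 ≤ t → ∀ (x' : X) (c : ℝ), h x' = (c : EReal) →
      (∑ τ ∈ Icc 1 t, u τ x') - ∑ τ ∈ Icc 1 t, u τ (x τ) ≤
        (c - hbar) / η t +
          ∑ τ ∈ Icc 1 t, ‖u τ‖ * γinv (η (τ - 1) / 2 * ‖u τ‖) := by
  classical
  have hfin : ∀ ξ : X →L[ℝ] ℝ, h (g ξ) = (((h (g ξ)).toReal : ℝ) : EReal) :=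
    fun ξ => (EReal.coe_toReal (hgdom ξ) (hproper (g ξ))).symm
  have hconvR : ∀ (ξ : X →L[ℝ] ℝ) (y : X) (cy : ℝ), h y = (cy : EReal) →
      (h (g ξ)).toReal + (ξ (y - g ξ) + γ ‖y - g ξ‖) ≤ cy := by
    intro ξ y cy hcy
    have h1 := hconv ξ y
    rw [hcy, hfin ξ] at h1
    exact_mod_cast h1
  have hHge : ∀ ξ : X →L[ℝ] ℝ, hbar ≤ (h (g ξ)).toReal := by
    intro ξ
    have h1 : (⨅ y : X, h y) ≤ h (g ξ) := iInf_le _ _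
    rw [hbar_inf, hfin ξ] at h1
    exact_mod_cast h1
  have hH0 : (h (g 0)).toReal = hbar := by
    have hle : (((h (g 0)).toReal : ℝ) : EReal) ≤ (hbar : EReal) := by
      rw [← hbar_inf]
      apply le_iInf
      intro y
      have h2 : (0:ℝ) ≤ (0 : X →L[ℝ] ℝ) (y - g 0) + γ ‖y - g 0‖ := by
        simpa using hγnn _ (norm_nonneg (y - g 0))
      calc (((h (g 0)).toReal : ℝ) : EReal)
          ≤ (((h (g 0)).toReal + ((0 : X →L[ℝ] ℝ) (y - g 0) + γ ‖y - g 0‖) : ℝ) : EReal) := by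
            exact_mod_cast le_add_of_nonneg_right h2
        _ = h (g 0) + (((0 : X →L[ℝ] ℝ) (y - g 0) + γ ‖y - g 0‖ : ℝ) : EReal) := by
            rw [EReal.coe_add, ← hfin 0]
        _ ≤ h y := hconv 0 y
    exact le_antisymm (by exact_mod_cast hle) (hHge 0)
  set fR : (X →L[ℝ] ℝ) → ℝ := fun ξ => ξ (g ξ) - (h (g ξ)).toReal + hbar with hfR
  have hFY : ∀ (ξ : X →L[ℝ] ℝ) (y : X) (cy : ℝ), h y = (cy : EReal) →
      ξ y ≤ cy - hbar + fR ξ := by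
    intro ξ y cy hcy
    have h1 := hconvR ξ y cy hcy
    have h2 := hγnn _ (norm_nonneg (y - g ξ))
    have h3 : ξ (y - g ξ) = ξ y - ξ (g ξ) := map_sub ξ y (g ξ)
    simp only [hfR]
    linarith
  -- stability / one-step bound for the conjugate
  have hstab : ∀ (ξ v : X →L[ℝ] ℝ),
      fR (ξ + v) ≤ fR ξ + v (g ξ) + ‖v‖ * γinv (‖v‖ / 2) := by
    intro ξ v
    by_cases hv : v = 0
    · subst hv
      simp [hγinv0, hfR]
    · have hvn : 0 < ‖v‖ := norm_pos_iff.mpr hv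
      obtain ⟨r, hr, hrs⟩ := honto (‖v‖ / 2) (by positivity)
      have hrinv : γinv (‖v‖ / 2) = r := by rw [← hrs, hγinv r hr]
      have e1 := hconvR ξ (g (ξ + v)) ((h (g (ξ + v))).toReal) (hfin (ξ + v))
      have e2 := hconvR (ξ + v) (g ξ) ((h (g ξ)).toReal) (hfin ξ)
      rw [norm_sub_rev (g ξ) (g (ξ + v))] at e2
      have m1 : ξ (g (ξ + v) - g ξ) = ξ (g (ξ + v)) - ξ (g ξ) := map_sub _ _ _
      have m2 : (ξ + v) (g ξ - g (ξ + v))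
          = (ξ (g ξ) - ξ (g (ξ + v))) + (v (g ξ) - v (g (ξ + v))) := by
        rw [ContinuousLinearMap.add_apply, map_sub, map_sub]
      have hbnd : v (g (ξ + v)) - v (g ξ) ≤ ‖v‖ * ‖g (ξ + v) - g ξ‖ := by
        have h5 := v.le_opNorm (g (ξ + v) - g ξ)
        have h4 : v (g (ξ + v) - g ξ) = v (g (ξ + v)) - v (g ξ) := map_sub _ _ _
        calc v (g (ξ + v)) - v (g ξ) = v (g (ξ + v) - g ξ) := h4.symm
          _ ≤ |v (g (ξ + v) - g ξ)| := le_abs_self _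
          _ = ‖v (g (ξ + v) - g ξ)‖ := (Real.norm_eq_abs _).symm
          _ ≤ ‖v‖ * ‖g (ξ + v) - g ξ‖ := h5
      have hsum2 : 2 * γ ‖g (ξ + v) - g ξ‖ ≤ v (g (ξ + v)) - v (g ξ) := by linarith
      have hdr : ‖g (ξ + v) - g ξ‖ ≤ r := by
        rcases (norm_nonneg (g (ξ + v) - g ξ)).eq_or_lt with h0 | h0
        · rw [← h0]; exact hr.le
        · by_contra hcon
          push_neg at hcon
          have hmlt := hmono (Set.mem_Ioi.mpr hr) (Set.mem_Ioi.mpr (hr.trans hcon)) hcon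
          simp only at hmlt
          rw [hrs] at hmlt
          have h6 : γ ‖g (ξ + v) - g ξ‖ / ‖g (ξ + v) - g ξ‖ ≤ ‖v‖ / 2 := by
            rw [div_le_div_iff₀ h0 two_pos]
            nlinarith [hsum2, hbnd]
          linarith
      have hγd : 0 ≤ γ ‖g (ξ + v) - g ξ‖ := hγnn _ (norm_nonneg _)
      have hvd : ‖v‖ * ‖g (ξ + v) - g ξ‖ ≤ ‖v‖ * r :=
        mul_le_mul_of_nonneg_left hdr (norm_nonneg v)
      have m3 : (ξ + v) (g (ξ + v)) = ξ (g (ξ + v)) + v (g (ξ + v)) :=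
        ContinuousLinearMap.add_apply ξ v (g (ξ + v))
      rw [hrinv]
      simp only [hfR]
      linarith [e1]
  -- scaling monotonicity of the conjugate
  have hscale : ∀ (U : X →L[ℝ] ℝ) (a b : ℝ), 0 < a → a ≤ b →
      fR (a • U) / a ≤ fR (b • U) / b := by
    intro U a b ha hab
    have hb : 0 < b := lt_of_lt_of_le ha hab
    have hy := hFY (b • U) (g (a • U)) ((h (g (a • U))).toReal) (hfin (a • U))
    have hnn : hbar ≤ (h (g (a • U))).toReal := hHge _
    rw [div_le_div_iff₀ ha hb]
    simp only [hfR, ContinuousLinearMap.smul_apply, smul_eq_mul] at hy ⊢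
    have k2 : ((h (g (a • U))).toReal - hbar) * a ≤ ((h (g (a • U))).toReal - hbar) * b :=
      mul_le_mul_of_nonneg_left hab (by linarith)
    nlinarith [mul_le_mul_of_nonneg_right hy ha.le, k2]
  -- main telescoping bound by induction
  have key : ∀ t : ℕ,
      fR (η t • ∑ τ ∈ Icc 1 t, u τ) / η t ≤
        ∑ τ ∈ Icc 1 t, (u τ (x τ) + ‖u τ‖ * γinv (η (τ - 1) / 2 * ‖u τ‖)) := by
    intro t
    induction t with
    | zero =>
      rw [show (Icc 1 0 : Finset ℕ) = ∅ from Finset.Icc_eq_empty (by omega)]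
      simp [hfR, hH0]
    | succ n ih =>
      have h1n : (1:ℕ) ≤ n + 1 := Nat.le_add_left 1 n
      have hUsucc : ∑ τ ∈ Icc 1 (n+1), u τ = (∑ τ ∈ Icc 1 n, u τ) + u (n+1) :=
        Finset.sum_Icc_succ_top h1n _
      have hmon : η (n+1) ≤ η n := hηmono n (n+1) (Nat.le_succ n)
      have hxn : x (n+1) = g (η n • ∑ τ ∈ Icc 1 n, u τ) := by
        have h7 := hx (n+1) h1n
        rw [Nat.add_sub_cancel] at h7
        exact h7
      have hnorm : ‖η n • u (n+1)‖ = η n * ‖u (n+1)‖ := by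
        rw [norm_smul (η n) (u (n+1)), Real.norm_eq_abs, abs_of_pos (hηpos n)]
      have happ : (η n • u (n+1)) (g (η n • ∑ τ ∈ Icc 1 n, u τ))
          = η n * u (n+1) (x (n+1)) := by
        rw [hxn]; simp
      have harg2 : η n * ‖u (n+1)‖ / 2 = η (n + 1 - 1) / 2 * ‖u (n+1)‖ := by
        rw [Nat.add_sub_cancel]; ring
      have hne : η n ≠ 0 := ne_of_gt (hηpos n)
      calc fR (η (n+1) • ∑ τ ∈ Icc 1 (n+1), u τ) / η (n+1)
          = fR (η (n+1) • ((∑ τ ∈ Icc 1 n, u τ) + u (n+1))) / η (n+1) := by rw [hUsucc]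
        _ ≤ fR (η n • ((∑ τ ∈ Icc 1 n, u τ) + u (n+1))) / η n :=
            hscale _ _ _ (hηpos (n+1)) hmon
        _ = fR (η n • ∑ τ ∈ Icc 1 n, u τ + η n • u (n+1)) / η n := by rw [smul_add]
        _ ≤ (fR (η n • ∑ τ ∈ Icc 1 n, u τ)
              + (η n • u (n+1)) (g (η n • ∑ τ ∈ Icc 1 n, u τ))
              + ‖η n • u (n+1)‖ * γinv (‖η n • u (n+1)‖ / 2)) / η n := by
            exact (div_le_div_iff_of_pos_right (hηpos n)).mpr (hstab _ _)
        _ = fR (η n • ∑ τ ∈ Icc 1 n, u τ) / η n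
              + (u (n+1) (x (n+1)) + ‖u (n+1)‖ * γinv (η (n + 1 - 1) / 2 * ‖u (n+1)‖)) := by
            rw [happ, hnorm, harg2]
            field_simp
            ring
        _ ≤ (∑ τ ∈ Icc 1 n, (u τ (x τ) + ‖u τ‖ * γinv (η (τ - 1) / 2 * ‖u τ‖)))
              + (u (n+1) (x (n+1)) + ‖u (n+1)‖ * γinv (η (n + 1 - 1) / 2 * ‖u (n+1)‖)) := by
            linarith [ih]
        _ = ∑ τ ∈ Icc 1 (n+1), (u τ (x τ) + ‖u τ‖ * γinv (η (τ - 1) / 2 * ‖u τ‖)) :=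
            (Finset.sum_Icc_succ_top h1n _).symm
  intro t ht x' c hc
  have hFY' := hFY (η t • ∑ τ ∈ Icc 1 t, u τ) x' c hc
  have happx : (η t • ∑ τ ∈ Icc 1 t, u τ) x' = η t * ∑ τ ∈ Icc 1 t, u τ x' := by
    simp [ContinuousLinearMap.sum_apply, Finset.mul_sum]
  rw [happx] at hFY'
  have hP : (∑ τ ∈ Icc 1 t, u τ x')
      ≤ (c - hbar) / η t + fR (η t • ∑ τ ∈ Icc 1 t, u τ) / η t := by
    rw [← add_div, le_div_iff₀ (hηpos t)]
    linarith [hFY']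
  have hK := key t
  rw [Finset.sum_add_distrib] at hK
  linarith [hP, hK]
end

section
/- In the continuous two-player zero-sum game setting, suppose the game 𝒢 = (S1, S2, u) has value V, and let (s^1_t)_{t≥1}, (s^2_t)_{t≥1} be sequences of plays such that player 1 has sublinear realized regret. Then liminf_{t→∞} (1/t)·Σ_{τ=1}^t u(s^1_τ, s^2_τ) ≥ V. -/
open Finset MeasureTheory Filter
open scoped ENNReal

/-- **Sublinear regret of player 1 lower-bounds the average payoff by the value.**
In a continuous two-player zero-sum game `(S1, S2, u)` with value `V`, if along the
plays `(s¹_t), (s²_t)` player 1 has sublinear realized regret, then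
`liminf_{t→∞} (1/t) Σ_{τ=1}^t u(s¹_τ, s²_τ) ≥ V`. -/
theorem stmt13 {S1 S2 : Type*}
    [MetricSpace S1] [CompactSpace S1] [Nonempty S1] [MeasurableSpace S1] [BorelSpace S1]
    [MetricSpace S2] [CompactSpace S2] [Nonempty S2] [MeasurableSpace S2] [BorelSpace S2]
    (u : C(S1 × S2, ℝ)) (V : ℝ)
    -- the game has value `V`
    (hval₁ : (⨆ x1 : ProbabilityMeasure S1, ⨅ x2 : ProbabilityMeasure S2,
        ∫ s, u s ∂((x1 : Measure S1).prod (x2 : Measure S2))) = V)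
    (hval₂ : (⨅ x2 : ProbabilityMeasure S2, ⨆ x1 : ProbabilityMeasure S1,
        ∫ s, u s ∂((x1 : Measure S1).prod (x2 : Measure S2))) = V)
    -- the plays, along which player 1 has sublinear realized regret
    (s1 : ℕ → S1) (s2 : ℕ → S2)
    (hreg1 : limsup (fun t : ℕ => (1 / (t : ℝ)) *
        ((⨆ a : S1, ∑ τ ∈ Icc 1 t, u (a, s2 τ)) -
          ∑ τ ∈ Icc 1 t, u (s1 τ, s2 τ))) atTop ≤ 0) :
    V ≤ liminf (fun t : ℕ => (1 / (t : ℝ)) * ∑ τ ∈ Icc 1 t, u (s1 τ, s2 τ)) atTop := by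
  have hunorm : ∀ x : S1 × S2, ‖u x‖ ≤ ‖u‖ := fun x => u.norm_coe_le_norm x
  have hC0 : (0 : ℝ) ≤ ‖u‖ := norm_nonneg u
  haveI : Nonempty (ProbabilityMeasure S1) :=
    ⟨⟨Measure.dirac (Classical.arbitrary S1), inferInstance⟩⟩
  -- integrability of `u` against any finite measure on the product
  have hintu : ∀ (μ : Measure (S1 × S2)) [IsFiniteMeasure μ], Integrable (fun s => u s) μ :=
    fun μ _ => ⟨u.continuous.aestronglyMeasurable,
      HasFiniteIntegral.of_bounded (C := ‖u‖) (ae_of_all _ hunorm)⟩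
  -- the integral against any pair of probability measures is bounded by ‖u‖
  have hbound : ∀ (x1 : ProbabilityMeasure S1) (x2 : ProbabilityMeasure S2),
      ‖∫ s, u s ∂((x1 : Measure S1).prod (x2 : Measure S2))‖ ≤ ‖u‖ := by
    intro x1 x2
    have := norm_integral_le_of_norm_le_const (μ := (x1 : Measure S1).prod (x2 : Measure S2))
      (f := fun s => u s) (C := ‖u‖) (ae_of_all _ hunorm)
    simpa using this
  -- Key step: against any mixed strategy of player 2, some pure strategy of
  -- player 1 gets at least (nearly) `V`.
  have key : ∀ x2 : ProbabilityMeasure S2,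
      V ≤ ⨆ a : S1, ∫ b, u (a, b) ∂(x2 : Measure S2) := by
    intro x2
    have hg_bdd : BddAbove (Set.range fun a : S1 => ∫ b, u (a, b) ∂(x2 : Measure S2)) := by
      refine ⟨‖u‖, ?_⟩
      rintro _ ⟨a, rfl⟩
      have := norm_integral_le_of_norm_le_const (μ := (x2 : Measure S2))
        (f := fun b => u (a, b)) (C := ‖u‖) (ae_of_all _ fun b => hunorm (a, b))
      simp only [measure_univ, ENNReal.toReal_one, probReal_univ, mul_one] at this
      exact (le_abs_self _).trans this
    have hsup_bdd : BddAbove (Set.range fun x1 : ProbabilityMeasure S1 =>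
        ∫ s, u s ∂((x1 : Measure S1).prod (x2 : Measure S2))) := by
      refine ⟨‖u‖, ?_⟩
      rintro _ ⟨x1, rfl⟩
      exact (le_abs_self _).trans (hbound x1 x2)
    have h1 : V ≤ ⨆ x1 : ProbabilityMeasure S1,
        ∫ s, u s ∂((x1 : Measure S1).prod (x2 : Measure S2)) := by
      rw [← hval₂]
      obtain ⟨a0⟩ := (inferInstance : Nonempty S1)
      set d0 : ProbabilityMeasure S1 := ⟨Measure.dirac a0, inferInstance⟩ with hd0
      haveI : Nonempty (ProbabilityMeasure S1) := ⟨d0⟩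
      refine ciInf_le ⟨-‖u‖, ?_⟩ x2
      rintro _ ⟨y2, rfl⟩
      refine le_trans ?_ (le_ciSup (f := fun x1 : ProbabilityMeasure S1 =>
        ∫ s, u s ∂((x1 : Measure S1).prod (y2 : Measure S2)))
        (by refine ⟨‖u‖, ?_⟩; rintro _ ⟨x1, rfl⟩; exact (le_abs_self _).trans (hbound x1 y2))
        d0)
      have h := hbound d0 y2
      rw [Real.norm_eq_abs] at h
      have h' := neg_abs_le (∫ s, u s ∂((d0 : Measure S1).prod (y2 : Measure S2)))
      linarith
    refine h1.trans (ciSup_le fun x1 => ?_)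
    rw [integral_prod _ (hintu _)]
    calc ∫ a, ∫ b, u (a, b) ∂(x2 : Measure S2) ∂(x1 : Measure S1)
        ≤ ∫ _, (⨆ a' : S1, ∫ b, u (a', b) ∂(x2 : Measure S2)) ∂(x1 : Measure S1) := by
          refine integral_mono ?_ (integrable_const _) fun a => le_ciSup hg_bdd a
          refine ⟨?_, HasFiniteIntegral.of_bounded (C := ‖u‖) (ae_of_all _ ?_)⟩
          · refine Continuous.aestronglyMeasurable ?_
            apply continuous_of_dominated (bound := fun _ => ‖u‖)
            · exact fun a => (u.continuous.comp (Continuous.prodMk_right a)).aestronglyMeasurable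
            · exact fun a => ae_of_all _ fun b => hunorm (a, b)
            · exact integrable_const _
            · exact ae_of_all _ fun b =>
                u.continuous.comp (continuous_id.prodMk continuous_const)
          · intro a
            have := norm_integral_le_of_norm_le_const (μ := (x2 : Measure S2))
              (f := fun b => u (a, b)) (C := ‖u‖) (ae_of_all _ fun b => hunorm (a, b))
            simpa using this
      _ = ⨆ a' : S1, ∫ b, u (a', b) ∂(x2 : Measure S2) := by simp
  -- sums are bounded above, so the pure sup over the sum is bounded
  have hsum_bdd : ∀ t : ℕ, BddAbove (Set.range fun a : S1 =>
      ∑ τ ∈ Icc 1 t, u (a, s2 τ)) := by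
    intro t
    refine ⟨(t : ℝ) * ‖u‖, ?_⟩
    rintro _ ⟨a, rfl⟩
    calc ∑ τ ∈ Icc 1 t, u (a, s2 τ) ≤ ∑ τ ∈ Icc 1 t, ‖u‖ :=
          Finset.sum_le_sum fun τ _ => (le_abs_self _).trans (hunorm (a, s2 τ))
      _ = (t : ℝ) * ‖u‖ := by simp [Nat.card_Icc, mul_comm]
  -- for t ≥ 1, the empirical average of the best response is at least V
  have hVt : ∀ t : ℕ, 1 ≤ t →
      V ≤ (1 / (t : ℝ)) * ⨆ a : S1, ∑ τ ∈ Icc 1 t, u (a, s2 τ) := by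
    intro t ht
    set ν : Measure S2 := ((t : ℝ≥0∞))⁻¹ • ∑ τ ∈ Icc 1 t, Measure.dirac (s2 τ) with hν
    have hprob : IsProbabilityMeasure ν := by
      constructor
      rw [hν]
      simp only [Measure.smul_apply, Measure.finset_sum_apply, Measure.dirac_apply' _
        MeasurableSet.univ, Set.indicator_univ, Pi.one_apply, Finset.sum_const,
        Nat.card_Icc, add_tsub_cancel_right, nsmul_eq_mul, mul_one, smul_eq_mul]
      rw [ENNReal.inv_mul_cancel (by exact_mod_cast Nat.one_le_iff_ne_zero.mp ht) (by simp)]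
    have hint : ∀ a : S1, ∫ b, u (a, b) ∂ν =
        (1 / (t : ℝ)) * ∑ τ ∈ Icc 1 t, u (a, s2 τ) := by
      intro a
      have hI : ∀ τ ∈ Icc 1 t, Integrable (fun b => u (a, b)) (Measure.dirac (s2 τ)) :=
        fun τ _ => ⟨(u.continuous.comp (Continuous.prodMk_right a)).aestronglyMeasurable,
          HasFiniteIntegral.of_bounded (C := ‖u‖) (ae_of_all _ fun b => hunorm (a, b))⟩
      rw [hν, integral_smul_measure, integral_finset_sum_measure hI]
      simp [integral_dirac, ENNReal.toReal_inv, one_div]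
    have := key ⟨ν, hprob⟩
    simp only [ProbabilityMeasure.coe_mk] at this
    refine this.trans (ciSup_le fun a => ?_)
    rw [hint a]
    have h1t : (0 : ℝ) ≤ 1 / (t : ℝ) := by positivity
    exact mul_le_mul_of_nonneg_left (le_ciSup (hsum_bdd t) a) h1t
  -- abbreviations
  set f : ℕ → ℝ := fun t => (1 / (t : ℝ)) * ∑ τ ∈ Icc 1 t, u (s1 τ, s2 τ) with hf
  set r : ℕ → ℝ := fun t => (1 / (t : ℝ)) *
      ((⨆ a : S1, ∑ τ ∈ Icc 1 t, u (a, s2 τ)) - ∑ τ ∈ Icc 1 t, u (s1 τ, s2 τ)) with hr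
  -- pointwise: f t ≥ V - r t for t ≥ 1
  have hfr : ∀ t : ℕ, 1 ≤ t → V - r t ≤ f t := by
    intro t ht
    have : f t = (1 / (t : ℝ)) * (⨆ a : S1, ∑ τ ∈ Icc 1 t, u (a, s2 τ)) - r t := by
      simp only [hf, hr, mul_sub]; ring
    rw [this]
    have := hVt t ht
    linarith
  -- f is bounded below
  have hf_lb : ∀ t : ℕ, -‖u‖ ≤ f t := by
    intro t
    rcases Nat.eq_zero_or_pos t with h0 | hpos
    · subst h0
      have h00 : f 0 = 0 := by simp [hf]
      rw [h00]; linarith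
    have h1 : -((t : ℝ) * ‖u‖) ≤ ∑ τ ∈ Icc 1 t, u (s1 τ, s2 τ) := by
      have : ∑ τ ∈ Icc 1 t, (-‖u‖) ≤ ∑ τ ∈ Icc 1 t, u (s1 τ, s2 τ) :=
        Finset.sum_le_sum fun τ _ => neg_le_of_abs_le (hunorm (s1 τ, s2 τ))
      simpa [Nat.card_Icc, mul_comm] using this
    have htpos : (0 : ℝ) < t := by exact_mod_cast hpos
    have : (1 / (t : ℝ)) * (-((t : ℝ) * ‖u‖)) ≤ f t :=
      mul_le_mul_of_nonneg_left h1 (by positivity)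
    calc -‖u‖ = (1 / (t : ℝ)) * (-((t : ℝ) * ‖u‖)) := by
          rw [one_div, mul_neg, inv_mul_cancel_left₀ htpos.ne']
      _ ≤ f t := this
  have hf_ub : ∀ t : ℕ, f t ≤ ‖u‖ := by
    intro t
    rcases Nat.eq_zero_or_pos t with h0 | hpos
    · subst h0
      have h00 : f 0 = 0 := by simp [hf]
      rw [h00]; linarith
    have htpos : (0 : ℝ) < t := by exact_mod_cast hpos
    have h1 : ∑ τ ∈ Icc 1 t, u (s1 τ, s2 τ) ≤ (t : ℝ) * ‖u‖ := by
      calc ∑ τ ∈ Icc 1 t, u (s1 τ, s2 τ) ≤ ∑ τ ∈ Icc 1 t, ‖u‖ :=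
            Finset.sum_le_sum fun τ _ => (le_abs_self _).trans (hunorm (s1 τ, s2 τ))
        _ = (t : ℝ) * ‖u‖ := by simp [Nat.card_Icc, mul_comm]
    have : f t ≤ (1 / (t : ℝ)) * ((t : ℝ) * ‖u‖) :=
      mul_le_mul_of_nonneg_left h1 (by positivity)
    calc f t ≤ (1 / (t : ℝ)) * ((t : ℝ) * ‖u‖) := this
      _ = ‖u‖ := by rw [one_div, inv_mul_cancel_left₀ htpos.ne']
  have hf_cobdd : IsCoboundedUnder (· ≥ ·) atTop f :=
    (isBoundedUnder_of ⟨‖u‖, hf_ub⟩ :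
      IsBoundedUnder (· ≤ ·) atTop f).isCoboundedUnder_ge
  -- r is bounded above
  have hr_ub : ∀ t : ℕ, r t ≤ 2 * ‖u‖ := by
    intro t
    rcases Nat.eq_zero_or_pos t with h0 | hpos
    · subst h0
      have h00 : r 0 = 0 := by simp [hr]
      rw [h00]; positivity
    have htpos : (0 : ℝ) < t := by exact_mod_cast hpos
    have h1 : (⨆ a : S1, ∑ τ ∈ Icc 1 t, u (a, s2 τ)) ≤ (t : ℝ) * ‖u‖ := by
      refine ciSup_le fun a => ?_
      calc ∑ τ ∈ Icc 1 t, u (a, s2 τ) ≤ ∑ τ ∈ Icc 1 t, ‖u‖ :=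
            Finset.sum_le_sum fun τ _ => (le_abs_self _).trans (hunorm (a, s2 τ))
        _ = (t : ℝ) * ‖u‖ := by simp [Nat.card_Icc, mul_comm]
    have h2 : -((t : ℝ) * ‖u‖) ≤ ∑ τ ∈ Icc 1 t, u (s1 τ, s2 τ) := by
      have : ∑ τ ∈ Icc 1 t, (-‖u‖) ≤ ∑ τ ∈ Icc 1 t, u (s1 τ, s2 τ) :=
        Finset.sum_le_sum fun τ _ => neg_le_of_abs_le (hunorm (s1 τ, s2 τ))
      simpa [Nat.card_Icc, mul_comm] using this
    have h3 : (⨆ a : S1, ∑ τ ∈ Icc 1 t, u (a, s2 τ)) -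
        ∑ τ ∈ Icc 1 t, u (s1 τ, s2 τ) ≤ 2 * ((t : ℝ) * ‖u‖) := by linarith
    calc r t ≤ (1 / (t : ℝ)) * (2 * ((t : ℝ) * ‖u‖)) :=
          mul_le_mul_of_nonneg_left h3 (by positivity)
      _ = 2 * ‖u‖ := by
          rw [show (2:ℝ) * ((t : ℝ) * ‖u‖) = (t : ℝ) * (2 * ‖u‖) by ring,
            one_div, inv_mul_cancel_left₀ htpos.ne']
  have hr_bdd : IsBoundedUnder (· ≤ ·) atTop r :=
    isBoundedUnder_of ⟨2 * ‖u‖, hr_ub⟩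
  -- ε-argument
  rw [← sub_nonneg]
  by_contra hneg
  push_neg at hneg
  set ε : ℝ := (V - liminf f atTop) / 2 with hε
  have hεpos : 0 < ε := by
    simp only [hε]
    linarith [hneg]
  have hrlt : ∀ᶠ t in atTop, r t < ε :=
    eventually_lt_of_limsup_lt (lt_of_le_of_lt hreg1 hεpos) hr_bdd
  have hflb : ∀ᶠ t in atTop, V - ε ≤ f t := by
    filter_upwards [hrlt, eventually_ge_atTop 1] with t hrt ht1
    have := hfr t ht1
    linarith
  have : V - ε ≤ liminf f atTop := le_liminf_of_le hf_cobdd hflb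
  simp only [hε] at this
  linarith
end

section
/- In the continuous two-player zero-sum game setting, suppose the game 𝒢 = (S1, S2, u) has value V, and let (s^1_t)_{t≥1}, (s^2_t)_{t≥1} be sequences of plays such that both players have sublinear realized regret. Then lim_{t→∞} (1/t)·Σ_{τ=1}^t u(s^1_τ, s^2_τ) = V. -/
open Finset MeasureTheory Filter
open scoped ENNReal NNReal

section Aux

lemma aux_integrable_dirac {α : Type*} [MeasurableSpace α] {f : α → ℝ}
    (hf : StronglyMeasurable f) (a : α) : Integrable f (Measure.dirac a) := by
  refine ⟨hf.aestronglyMeasurable, ?_⟩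
  rw [hasFiniteIntegral_def,
    lintegral_dirac' a (hf.measurable.enorm)]
  exact enorm_lt_top

lemma aux_emp_prob {α : Type*} [MeasurableSpace α] {t : ℕ} (ht : 1 ≤ t) (s : ℕ → α) :
    IsProbabilityMeasure
      ((t : ℝ≥0∞)⁻¹ • ∑ τ ∈ Finset.Icc 1 t, Measure.dirac (s τ)) := by
  constructor
  have ht0 : (t : ℝ≥0∞) ≠ 0 := by exact_mod_cast Nat.one_le_iff_ne_zero.mp ht
  simp [Measure.smul_apply, Measure.finset_sum_apply, smul_eq_mul,
    Nat.card_Icc, ENNReal.inv_mul_cancel ht0 (ENNReal.natCast_ne_top t)]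

lemma aux_integral_emp {α : Type*} [MeasurableSpace α] {t : ℕ} (s : ℕ → α) (f : α → ℝ)
    (hf : StronglyMeasurable f) :
    ∫ x, f x ∂((t : ℝ≥0∞)⁻¹ • ∑ τ ∈ Finset.Icc 1 t, Measure.dirac (s τ))
      = (1 / (t : ℝ)) * ∑ τ ∈ Finset.Icc 1 t, f (s τ) := by
  rw [integral_smul_measure,
    integral_finset_sum_measure (fun τ _ => aux_integrable_dirac hf (s τ))]
  simp_rw [integral_dirac' f _ hf]
  simp [ENNReal.toReal_inv, smul_eq_mul, one_div]

lemma aux_cont_integrable {α : Type*} [TopologicalSpace α] [CompactSpace α]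
    [MeasurableSpace α] [OpensMeasurableSpace α] (μ : Measure α) [IsFiniteMeasure μ]
    {f : α → ℝ} (hf : Continuous f) : Integrable f μ :=
  hf.integrable_of_hasCompactSupport (isClosed_tsupport f).isCompact

end Aux

/-- **Convergence of the average payoff to the value under mutual sublinear regret.**
In a continuous two-player zero-sum game `(S1, S2, u)` with value `V`, if along the
plays `(s¹_t), (s²_t)` both players have sublinear realized regret, then
`lim_{t→∞} (1/t) Σ_{τ=1}^t u(s¹_τ, s²_τ) = V`. -/
theorem stmt14 {S1 S2 : Type*}
    [MetricSpace S1] [CompactSpace S1] [Nonempty S1] [MeasurableSpace S1] [BorelSpace S1]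
    [MetricSpace S2] [CompactSpace S2] [Nonempty S2] [MeasurableSpace S2] [BorelSpace S2]
    (u : C(S1 × S2, ℝ)) (V : ℝ)
    (hval₁ : (⨆ x1 : ProbabilityMeasure S1, ⨅ x2 : ProbabilityMeasure S2,
        ∫ s, u s ∂((x1 : Measure S1).prod (x2 : Measure S2))) = V)
    (hval₂ : (⨅ x2 : ProbabilityMeasure S2, ⨆ x1 : ProbabilityMeasure S1,
        ∫ s, u s ∂((x1 : Measure S1).prod (x2 : Measure S2))) = V)
    (s1 : ℕ → S1) (s2 : ℕ → S2)
    -- player 1 has sublinear realized regret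
    (hreg1 : limsup (fun t : ℕ => (1 / (t : ℝ)) *
        ((⨆ a : S1, ∑ τ ∈ Icc 1 t, u (a, s2 τ)) -
          ∑ τ ∈ Icc 1 t, u (s1 τ, s2 τ))) atTop ≤ 0)
    -- player 2 (whose payoff is `-u`) has sublinear realized regret
    (hreg2 : limsup (fun t : ℕ => (1 / (t : ℝ)) *
        ((⨆ b : S2, ∑ τ ∈ Icc 1 t, -u (s1 τ, b)) -
          ∑ τ ∈ Icc 1 t, -u (s1 τ, s2 τ))) atTop ≤ 0) :
    Tendsto (fun t : ℕ => (1 / (t : ℝ)) * ∑ τ ∈ Icc 1 t, u (s1 τ, s2 τ))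
      atTop (nhds V) := by
  classical
  -- basic bounds
  have hu : ∀ p : S1 × S2, |u p| ≤ ‖u‖ := fun p => u.norm_coe_le_norm p
  haveI : Nonempty (ProbabilityMeasure S1) :=
    ⟨⟨Measure.dirac (Classical.arbitrary S1), inferInstance⟩⟩
  haveI : Nonempty (ProbabilityMeasure S2) :=
    ⟨⟨Measure.dirac (Classical.arbitrary S2), inferInstance⟩⟩
  -- |∫ u d(x1 × x2)| ≤ ‖u‖
  have habs : ∀ (μ1 : Measure S1) (μ2 : Measure S2), IsProbabilityMeasure μ1 →
      IsProbabilityMeasure μ2 → |∫ s, u s ∂(μ1.prod μ2)| ≤ ‖u‖ := by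
    intro μ1 μ2 h1 h2
    have := norm_integral_le_of_norm_le_const (μ := μ1.prod μ2) (f := fun s => u s)
      (C := ‖u‖) (Eventually.of_forall fun s => u.norm_coe_le_norm s)
    simpa [Real.norm_eq_abs, measure_univ] using this
  have habs' : ∀ (x1 : ProbabilityMeasure S1) (x2 : ProbabilityMeasure S2),
      |∫ s, u s ∂((x1 : Measure S1).prod (x2 : Measure S2))| ≤ ‖u‖ :=
    fun x1 x2 => habs _ _ x1.2 x2.2
  -- sum bound
  have habs_sum : ∀ (t : ℕ) (v : ℕ → ℝ), (∀ τ, |v τ| ≤ ‖u‖) →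
      |∑ τ ∈ Icc 1 t, v τ| ≤ t * ‖u‖ := by
    intro t v hv
    calc |∑ τ ∈ Icc 1 t, v τ| ≤ ∑ τ ∈ Icc 1 t, |v τ| := Finset.abs_sum_le_sum_abs _ _
      _ ≤ ∑ τ ∈ Icc 1 t, ‖u‖ := Finset.sum_le_sum fun τ _ => hv τ
      _ = t * ‖u‖ := by rw [Finset.sum_const, Nat.card_Icc]; simp [nsmul_eq_mul]
  -- key inequality 1 : t * V ≤ ⨆ a, ∑ u (a, s2 τ)
  have key1 : ∀ t : ℕ, 1 ≤ t →
      (t : ℝ) * V ≤ ⨆ a : S1, ∑ τ ∈ Icc 1 t, u (a, s2 τ) := by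
    intro t ht
    have ht0 : (0:ℝ) < t := by exact_mod_cast ht
    set ν : Measure S2 := (t : ℝ≥0∞)⁻¹ • ∑ τ ∈ Icc 1 t, Measure.dirac (s2 τ) with hν
    haveI hνp : IsProbabilityMeasure ν := aux_emp_prob ht s2
    set x2 : ProbabilityMeasure S2 := ⟨ν, hνp⟩ with hx2
    set C := ⨆ a : S1, ∑ τ ∈ Icc 1 t, u (a, s2 τ) with hC
    have hgcont : Continuous (fun a : S1 => ∑ τ ∈ Icc 1 t, u (a, s2 τ)) :=
      continuous_finset_sum _ fun τ _ =>
        u.continuous.comp (continuous_id.prodMk continuous_const)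
    have hbddA : BddAbove (Set.range fun a : S1 => ∑ τ ∈ Icc 1 t, u (a, s2 τ)) :=
      (isCompact_range hgcont).bddAbove
    have hleC : ∀ a : S1, (∑ τ ∈ Icc 1 t, u (a, s2 τ)) ≤ C := fun a => le_ciSup hbddA a
    -- every mixed strategy payoff against the empirical measure is ≤ (1/t) * C
    have hI : ∀ x1 : ProbabilityMeasure S1,
        ∫ s, u s ∂((x1 : Measure S1).prod ν) ≤ (1 / (t:ℝ)) * C := by
      intro x1
      have hint : Integrable (fun s => u s) ((x1 : Measure S1).prod ν) :=
        aux_cont_integrable _ u.continuous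
      rw [MeasureTheory.integral_prod _ hint]
      have hFa : ∀ a : S1, (∫ b, u (a, b) ∂ν) = (1/(t:ℝ)) * ∑ τ ∈ Icc 1 t, u (a, s2 τ) :=
        fun a => aux_integral_emp s2 (fun b => u (a, b))
          ((u.continuous.comp (Continuous.prodMk_right a)).stronglyMeasurable)
      calc ∫ a, ∫ b, u (a, b) ∂ν ∂(x1 : Measure S1)
          = ∫ a, (1/(t:ℝ)) * ∑ τ ∈ Icc 1 t, u (a, s2 τ) ∂(x1 : Measure S1) := by
            simp_rw [hFa]
        _ ≤ ∫ _, (1/(t:ℝ)) * C ∂(x1 : Measure S1) := by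
            refine integral_mono ?_ (integrable_const _) ?_
            · exact aux_cont_integrable _ (continuous_const.mul hgcont)
            · intro a
              exact mul_le_mul_of_nonneg_left (hleC a) (by positivity)
        _ = (1/(t:ℝ)) * C := by simp [measure_univ]
    -- V ≤ ⨆ x1, ∫ ... ≤ (1/t) * C
    have hbddsup : ∀ x2' : ProbabilityMeasure S2, BddAbove (Set.range fun x1 : ProbabilityMeasure S1 =>
        ∫ s, u s ∂((x1 : Measure S1).prod (x2' : Measure S2))) := by
      intro x2'
      exact ⟨‖u‖, by rintro _ ⟨x1, rfl⟩; exact (abs_le.1 (habs' x1 x2')).2⟩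
    have hbddinf : BddBelow (Set.range fun x2' : ProbabilityMeasure S2 =>
        ⨆ x1 : ProbabilityMeasure S1,
          ∫ s, u s ∂((x1 : Measure S1).prod (x2' : Measure S2))) := by
      refine ⟨-‖u‖, ?_⟩
      rintro _ ⟨x2', rfl⟩
      obtain ⟨x1⟩ := (inferInstance : Nonempty (ProbabilityMeasure S1))
      exact le_trans (abs_le.1 (habs' x1 x2')).1 (le_ciSup (hbddsup x2') x1)
    have hVle : V ≤ ⨆ x1 : ProbabilityMeasure S1,
        ∫ s, u s ∂((x1 : Measure S1).prod (x2 : Measure S2)) := by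
      rw [← hval₂]
      exact ciInf_le hbddinf x2
    have h2 : (⨆ x1 : ProbabilityMeasure S1,
        ∫ s, u s ∂((x1 : Measure S1).prod (x2 : Measure S2))) ≤ (1/(t:ℝ)) * C :=
      ciSup_le fun x1 => hI x1
    have : V ≤ (1/(t:ℝ)) * C := hVle.trans h2
    calc (t : ℝ) * V ≤ (t:ℝ) * ((1/(t:ℝ)) * C) :=
          mul_le_mul_of_nonneg_left this ht0.le
      _ = C := by field_simp
  
  -- key inequality 2 : t * (-V) ≤ ⨆ b, ∑ -u (s1 τ, b)
  have key2 : ∀ t : ℕ, 1 ≤ t →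
      (t : ℝ) * (-V) ≤ ⨆ b : S2, ∑ τ ∈ Icc 1 t, -u (s1 τ, b) := by
    intro t ht
    have ht0 : (0:ℝ) < t := by exact_mod_cast ht
    set μ1 : Measure S1 := (t : ℝ≥0∞)⁻¹ • ∑ τ ∈ Icc 1 t, Measure.dirac (s1 τ) with hμ1
    haveI hμp : IsProbabilityMeasure μ1 := aux_emp_prob ht s1
    set x1e : ProbabilityMeasure S1 := ⟨μ1, hμp⟩ with hx1e
    set D := ⨆ b : S2, ∑ τ ∈ Icc 1 t, -u (s1 τ, b) with hD
    have hgcont : Continuous (fun b : S2 => ∑ τ ∈ Icc 1 t, -u (s1 τ, b)) :=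
      continuous_finset_sum _ fun τ _ =>
        (u.continuous.comp (continuous_const.prodMk continuous_id)).neg
    have hbddB : BddAbove (Set.range fun b : S2 => ∑ τ ∈ Icc 1 t, -u (s1 τ, b)) :=
      (isCompact_range hgcont).bddAbove
    have hleD : ∀ b : S2, (∑ τ ∈ Icc 1 t, -u (s1 τ, b)) ≤ D := fun b => le_ciSup hbddB b
    have hI : ∀ x2 : ProbabilityMeasure S2,
        (1/(t:ℝ)) * (-D) ≤ ∫ s, u s ∂((x1e : Measure S1).prod (x2 : Measure S2)) := by
      intro x2
      have hint : Integrable (fun s => u s) ((x1e : Measure S1).prod (x2 : Measure S2)) :=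
        aux_cont_integrable _ u.continuous
      rw [MeasureTheory.integral_prod _ hint]
      have hG : StronglyMeasurable fun a : S1 => ∫ b, u (a, b) ∂(x2 : Measure S2) :=
        StronglyMeasurable.integral_prod_right' (u.continuous.stronglyMeasurable)
      have hemp : ∫ a, ∫ b, u (a, b) ∂(x2 : Measure S2) ∂((x1e : Measure S1))
          = (1/(t:ℝ)) * ∑ τ ∈ Icc 1 t, ∫ b, u (s1 τ, b) ∂(x2 : Measure S2) :=
        aux_integral_emp s1 _ hG
      rw [hemp]
      refine mul_le_mul_of_nonneg_left ?_ (by positivity)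
      have hswap : (∑ τ ∈ Icc 1 t, ∫ b, u (s1 τ, b) ∂(x2 : Measure S2))
          = ∫ b, ∑ τ ∈ Icc 1 t, u (s1 τ, b) ∂(x2 : Measure S2) :=
        (integral_finset_sum _ (fun τ _ => aux_cont_integrable _
          (u.continuous.comp (continuous_const.prodMk continuous_id)))).symm
      rw [hswap]
      have hpt : ∀ b : S2, -D ≤ ∑ τ ∈ Icc 1 t, u (s1 τ, b) := by
        intro b
        have h := hleD b
        rw [Finset.sum_neg_distrib] at h
        linarith
      calc (-D) = ∫ _, (-D) ∂(x2 : Measure S2) := by simp [measure_univ]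
        _ ≤ ∫ b, ∑ τ ∈ Icc 1 t, u (s1 τ, b) ∂(x2 : Measure S2) :=
            integral_mono (integrable_const _)
              (aux_cont_integrable _ (continuous_finset_sum _ fun τ _ =>
                u.continuous.comp (continuous_const.prodMk continuous_id))) hpt
    have hbddinf2 : ∀ x1' : ProbabilityMeasure S1,
        BddBelow (Set.range fun x2' : ProbabilityMeasure S2 =>
          ∫ s, u s ∂((x1' : Measure S1).prod (x2' : Measure S2))) := fun x1' =>
      ⟨-‖u‖, by rintro _ ⟨x2', rfl⟩; exact (abs_le.1 (habs' x1' x2')).1⟩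
    have hbddsup2 : BddAbove (Set.range fun x1' : ProbabilityMeasure S1 =>
        ⨅ x2' : ProbabilityMeasure S2,
          ∫ s, u s ∂((x1' : Measure S1).prod (x2' : Measure S2))) := by
      refine ⟨‖u‖, ?_⟩
      rintro _ ⟨x1', rfl⟩
      obtain ⟨x2'⟩ := (inferInstance : Nonempty (ProbabilityMeasure S2))
      exact le_trans (ciInf_le (hbddinf2 x1') x2') (abs_le.1 (habs' x1' x2')).2
    have hVge : (⨅ x2' : ProbabilityMeasure S2,
        ∫ s, u s ∂((x1e : Measure S1).prod (x2' : Measure S2))) ≤ V := by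
      rw [← hval₁]
      exact le_ciSup hbddsup2 x1e
    have hlow : (1/(t:ℝ)) * (-D) ≤ ⨅ x2' : ProbabilityMeasure S2,
        ∫ s, u s ∂((x1e : Measure S1).prod (x2' : Measure S2)) :=
      le_ciInf fun x2' => hI x2'
    have hfin : (1/(t:ℝ)) * (-D) ≤ V := hlow.trans hVge
    have h' : (t:ℝ) * ((1/(t:ℝ)) * (-D)) ≤ (t:ℝ) * V :=
      mul_le_mul_of_nonneg_left hfin ht0.le
    have heq : (t:ℝ) * ((1/(t:ℝ)) * (-D)) = -D := by field_simp
    rw [heq] at h'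
    linarith
  -- boundedness of the regret sequences
  have hb1 : IsBoundedUnder (· ≤ ·) atTop (fun t : ℕ => (1 / (t : ℝ)) *
      ((⨆ a : S1, ∑ τ ∈ Icc 1 t, u (a, s2 τ)) - ∑ τ ∈ Icc 1 t, u (s1 τ, s2 τ))) := by
    refine isBoundedUnder_of ⟨2 * ‖u‖, fun t => ?_⟩
    have h1 : (⨆ a : S1, ∑ τ ∈ Icc 1 t, u (a, s2 τ)) ≤ t * ‖u‖ :=
      ciSup_le fun a => le_of_abs_le (habs_sum t _ (fun τ => hu _))
    have h2 : -(t:ℝ) * ‖u‖ ≤ ∑ τ ∈ Icc 1 t, u (s1 τ, s2 τ) := by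
      have := (abs_le.1 (habs_sum t (fun τ => u (s1 τ, s2 τ)) (fun τ => hu _))).1
      linarith
    rcases Nat.eq_zero_or_pos t with h | h
    · subst h; simp
    · have ht0 : (0:ℝ) < t := by exact_mod_cast h
      have hsub : (⨆ a : S1, ∑ τ ∈ Icc 1 t, u (a, s2 τ))
          - ∑ τ ∈ Icc 1 t, u (s1 τ, s2 τ) ≤ 2 * ((t:ℝ) * ‖u‖) := by linarith
      calc (1 / (t : ℝ)) * ((⨆ a : S1, ∑ τ ∈ Icc 1 t, u (a, s2 τ)) -
            ∑ τ ∈ Icc 1 t, u (s1 τ, s2 τ))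
          ≤ (1 / (t : ℝ)) * (2 * ((t:ℝ) * ‖u‖)) :=
            mul_le_mul_of_nonneg_left hsub (by positivity)
        _ = 2 * ‖u‖ := by field_simp
  have hb2 : IsBoundedUnder (· ≤ ·) atTop (fun t : ℕ => (1 / (t : ℝ)) *
      ((⨆ b : S2, ∑ τ ∈ Icc 1 t, -u (s1 τ, b)) - ∑ τ ∈ Icc 1 t, -u (s1 τ, s2 τ))) := by
    refine isBoundedUnder_of ⟨2 * ‖u‖, fun t => ?_⟩
    have h1 : (⨆ b : S2, ∑ τ ∈ Icc 1 t, -u (s1 τ, b)) ≤ t * ‖u‖ :=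
      ciSup_le fun b => le_of_abs_le (habs_sum t _ (fun τ => by
        rw [abs_neg]; exact hu _))
    have h2 : -(t:ℝ) * ‖u‖ ≤ ∑ τ ∈ Icc 1 t, -u (s1 τ, s2 τ) := by
      have := (abs_le.1 (habs_sum t (fun τ => -u (s1 τ, s2 τ)) (fun τ => by
        rw [abs_neg]; exact hu _))).1
      linarith
    rcases Nat.eq_zero_or_pos t with h | h
    · subst h; simp
    · have ht0 : (0:ℝ) < t := by exact_mod_cast h
      have hsub : (⨆ b : S2, ∑ τ ∈ Icc 1 t, -u (s1 τ, b))
          - ∑ τ ∈ Icc 1 t, -u (s1 τ, s2 τ) ≤ 2 * ((t:ℝ) * ‖u‖) := by linarith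
      calc (1 / (t : ℝ)) * ((⨆ b : S2, ∑ τ ∈ Icc 1 t, -u (s1 τ, b)) -
            ∑ τ ∈ Icc 1 t, -u (s1 τ, s2 τ))
          ≤ (1 / (t : ℝ)) * (2 * ((t:ℝ) * ‖u‖)) :=
            mul_le_mul_of_nonneg_left hsub (by positivity)
        _ = 2 * ‖u‖ := by field_simp
  -- conclude via order topology
  refine tendsto_order.2 ⟨?_, ?_⟩
  · intro a' ha'
    have hev1 : ∀ᶠ t : ℕ in atTop, (1 / (t : ℝ)) *
        ((⨆ a : S1, ∑ τ ∈ Icc 1 t, u (a, s2 τ)) -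
          ∑ τ ∈ Icc 1 t, u (s1 τ, s2 τ)) < V - a' :=
      eventually_lt_of_limsup_lt (lt_of_le_of_lt hreg1 (by linarith)) hb1
    filter_upwards [hev1, eventually_ge_atTop 1] with t h1 h2
    have ht0 : (0:ℝ) < t := by exact_mod_cast h2
    have hK := key1 t h2
    have hVle : V ≤ (1/(t:ℝ)) * (⨆ a : S1, ∑ τ ∈ Icc 1 t, u (a, s2 τ)) := by
      have h := mul_le_mul_of_nonneg_left hK (by positivity : (0:ℝ) ≤ 1/(t:ℝ))
      calc V = (1/(t:ℝ)) * ((t:ℝ) * V) := by field_simp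
        _ ≤ _ := h
    rw [mul_sub] at h1
    show a' < (1 / (t : ℝ)) * ∑ τ ∈ Icc (1:ℕ) t, u (s1 τ, s2 τ)
    linarith
  · intro a' ha'
    have hev2 : ∀ᶠ t : ℕ in atTop, (1 / (t : ℝ)) *
        ((⨆ b : S2, ∑ τ ∈ Icc 1 t, -u (s1 τ, b)) -
          ∑ τ ∈ Icc 1 t, -u (s1 τ, s2 τ)) < a' - V :=
      eventually_lt_of_limsup_lt (lt_of_le_of_lt hreg2 (by linarith)) hb2
    filter_upwards [hev2, eventually_ge_atTop 1] with t h1 h2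
    have ht0 : (0:ℝ) < t := by exact_mod_cast h2
    have hK := key2 t h2
    have hVle : -V ≤ (1/(t:ℝ)) * (⨆ b : S2, ∑ τ ∈ Icc 1 t, -u (s1 τ, b)) := by
      have h := mul_le_mul_of_nonneg_left hK (by positivity : (0:ℝ) ≤ 1/(t:ℝ))
      calc -V = (1/(t:ℝ)) * ((t:ℝ) * (-V)) := by field_simp
        _ ≤ _ := h
    rw [mul_sub, Finset.sum_neg_distrib, mul_neg] at h1
    show (1 / (t : ℝ)) * ∑ τ ∈ Icc (1:ℕ) t, u (s1 τ, s2 τ) < a'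
    linarith
end

section
/- (Weak convergence of the empirical distributions of play to the set of Nash equilibria — deterministic core.) In the continuous two-player zero-sum game setting, suppose the game 𝒢 = (S1, S2, u) has value V, and let (s^1_t)_{t≥1}, (s^2_t)_{t≥1} be sequences of plays along which both players have sublinear realized regret. For each t let x̂^i_t := (1/t)·Σ_{τ=1}^t δ_{s^i_τ} be the marginal empirical distribution of play of player i. Then every limit point (z1, z2) ∈ 𝒫1 × 𝒫2 of the sequence (x̂^1_t, x̂^2_t)_{t≥1} in the weak topology is a Nash equilibrium of 𝒢, i.e. satisfies sup_{x1∈𝒫1} ū(x1, z2) = V = inf_{x2∈𝒫2} ū(z1, x2). Consequently the sequence (x̂^1_t, x̂^2_t) converges to the set of Nash equilibria of 𝒢 in the weak topology. -/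
open Finset MeasureTheory Filter

private lemma integrable_cm {X : Type*} [MetricSpace X] [CompactSpace X]
    [MeasurableSpace X] [BorelSpace X]
    {f : X → ℝ} (hf : Continuous f) (μ : Measure X) [IsFiniteMeasure μ] : Integrable f μ :=
  hf.integrable_of_hasCompactSupport (HasCompactSupport.of_compactSpace f)

/-- **Weak limit points of the empirical distributions of play are Nash equilibria.**
In a continuous two-player zero-sum game `(S1, S2, u)` with value `V`, suppose both
players have sublinear realized regret along the plays `(s¹_t), (s²_t)`.  If
`(z1, z2)` is a weak limit point of the marginal empirical distributions of play
`x̂ⁱ_t = (1/t) Σ_{τ=1}^t δ_{sⁱ_τ}` (i.e. along some strictly increasing subsequence the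
empirical averages of every continuous function converge to its integral against `zᵢ`),
then `(z1, z2)` is a Nash equilibrium:
`sup_{x1} ū(x1, z2) = V = inf_{x2} ū(z1, x2)`. -/
theorem stmt15 {S1 S2 : Type*}
    [MetricSpace S1] [CompactSpace S1] [Nonempty S1] [MeasurableSpace S1] [BorelSpace S1]
    [MetricSpace S2] [CompactSpace S2] [Nonempty S2] [MeasurableSpace S2] [BorelSpace S2]
    (u : C(S1 × S2, ℝ)) (V : ℝ)
    (hval₁ : (⨆ x1 : ProbabilityMeasure S1, ⨅ x2 : ProbabilityMeasure S2,
        ∫ s, u s ∂((x1 : Measure S1).prod (x2 : Measure S2))) = V)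
    (hval₂ : (⨅ x2 : ProbabilityMeasure S2, ⨆ x1 : ProbabilityMeasure S1,
        ∫ s, u s ∂((x1 : Measure S1).prod (x2 : Measure S2))) = V)
    (s1 : ℕ → S1) (s2 : ℕ → S2)
    -- both players have sublinear realized regret
    (hreg1 : limsup (fun t : ℕ => (1 / (t : ℝ)) *
        ((⨆ a : S1, ∑ τ ∈ Icc 1 t, u (a, s2 τ)) -
          ∑ τ ∈ Icc 1 t, u (s1 τ, s2 τ))) atTop ≤ 0)
    (hreg2 : limsup (fun t : ℕ => (1 / (t : ℝ)) *
        ((⨆ b : S2, ∑ τ ∈ Icc 1 t, -u (s1 τ, b)) -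
          ∑ τ ∈ Icc 1 t, -u (s1 τ, s2 τ))) atTop ≤ 0)
    -- `(z1, z2)` is a weak limit point of the empirical distributions of play,
    -- witnessed by the strictly increasing subsequence `φ`
    (z1 : ProbabilityMeasure S1) (z2 : ProbabilityMeasure S2)
    (φ : ℕ → ℕ) (hφ : StrictMono φ) (hφ1 : ∀ k, 1 ≤ φ k)
    (hlim1 : ∀ f : C(S1, ℝ),
      Tendsto (fun k => (1 / (φ k : ℝ)) * ∑ τ ∈ Icc 1 (φ k), f (s1 τ)) atTop
        (nhds (∫ a, f a ∂(z1 : Measure S1))))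
    (hlim2 : ∀ f : C(S2, ℝ),
      Tendsto (fun k => (1 / (φ k : ℝ)) * ∑ τ ∈ Icc 1 (φ k), f (s2 τ)) atTop
        (nhds (∫ b, f b ∂(z2 : Measure S2)))) :
    (⨆ x1 : ProbabilityMeasure S1,
        ∫ s, u s ∂((x1 : Measure S1).prod (z2 : Measure S2))) = V ∧
    (⨅ x2 : ProbabilityMeasure S2,
        ∫ s, u s ∂((z1 : Measure S1).prod (x2 : Measure S2))) = V := by
  classical
  haveI hz1p : IsProbabilityMeasure (z1 : Measure S1) := z1.2
  haveI hz2p : IsProbabilityMeasure (z2 : Measure S2) := z2.2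
  haveI hne1 : Nonempty (ProbabilityMeasure S1) :=
    ⟨⟨Measure.dirac (Classical.arbitrary S1), inferInstance⟩⟩
  haveI hne2 : Nonempty (ProbabilityMeasure S2) :=
    ⟨⟨Measure.dirac (Classical.arbitrary S2), inferInstance⟩⟩
  set M : ℝ := ‖u‖ with hMdef
  have hMnonneg : 0 ≤ M := norm_nonneg u
  have hu_abs : ∀ p : S1 × S2, |u p| ≤ M := fun p => by
    simpa [Real.norm_eq_abs] using u.norm_coe_le_norm p
  have hint : ∀ (μ : Measure S1) (ν : Measure S2), IsProbabilityMeasure μ →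
      IsProbabilityMeasure ν → Integrable u (μ.prod ν) := by
    intro μ ν hμ hν
    exact integrable_cm u.continuous _
  -- the marginal payoffs
  set g : S1 → ℝ := fun a => ∫ b, u (a, b) ∂(z2 : Measure S2) with hgdef
  set h : S2 → ℝ := fun b => ∫ a, u (a, b) ∂(z1 : Measure S1) with hhdef
  have hg_abs : ∀ a, |g a| ≤ M := by
    intro a
    have := norm_integral_le_of_norm_le_const (μ := (z2 : Measure S2))
      (f := fun b => u (a, b)) (C := M) (ae_of_all _ fun b => by
        simpa [Real.norm_eq_abs] using hu_abs (a, b))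
    simpa [Real.norm_eq_abs, measure_univ] using this
  have hh_abs : ∀ b, |h b| ≤ M := by
    intro b
    have := norm_integral_le_of_norm_le_const (μ := (z1 : Measure S1))
      (f := fun a => u (a, b)) (C := M) (ae_of_all _ fun a => by
        simpa [Real.norm_eq_abs] using hu_abs (a, b))
    simpa [Real.norm_eq_abs, measure_univ] using this
  -- bound for the mixed payoffs
  have hbar_abs : ∀ (μ : Measure S1) (ν : Measure S2), IsProbabilityMeasure μ →
      IsProbabilityMeasure ν → |∫ s, u s ∂(μ.prod ν)| ≤ M := by
    intro μ ν hμ hν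
    have := norm_integral_le_of_norm_le_const (μ := μ.prod ν)
      (f := fun s => u s) (C := M) (ae_of_all _ fun s => by
        simpa [Real.norm_eq_abs] using hu_abs s)
    simpa [Real.norm_eq_abs, measure_univ] using this
  -- boundedness of the sums
  have hsum_abs : ∀ (t : ℕ) (v : ℕ → ℝ), (∀ τ, |v τ| ≤ M) →
      |∑ τ ∈ Icc 1 t, v τ| ≤ t * M := by
    intro t v hv
    calc |∑ τ ∈ Icc 1 t, v τ| ≤ ∑ τ ∈ Icc 1 t, |v τ| := Finset.abs_sum_le_sum_abs _ _
      _ ≤ ∑ τ ∈ Icc 1 t, M := Finset.sum_le_sum fun τ _ => hv τ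
      _ = t * M := by simp [Nat.card_Icc]
  have bddA : ∀ t : ℕ, BddAbove (Set.range fun a' : S1 => ∑ τ ∈ Icc 1 t, u (a', s2 τ)) := by
    intro t
    refine ⟨t * M, ?_⟩
    rintro _ ⟨a', rfl⟩
    exact (abs_le.1 (hsum_abs t _ (fun τ => hu_abs _))).2
  have bddB : ∀ t : ℕ, BddAbove (Set.range fun b' : S2 => ∑ τ ∈ Icc 1 t, -u (s1 τ, b')) := by
    intro t
    refine ⟨t * M, ?_⟩
    rintro _ ⟨b', rfl⟩
    have := hsum_abs t (fun τ => -u (s1 τ, b')) (fun τ => by simpa using hu_abs (s1 τ, b'))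
    exact (abs_le.1 this).2
  -- regret sequences are bounded above
  set r1 : ℕ → ℝ := fun t => (1 / (t : ℝ)) *
      ((⨆ a : S1, ∑ τ ∈ Icc 1 t, u (a, s2 τ)) - ∑ τ ∈ Icc 1 t, u (s1 τ, s2 τ)) with hr1def
  set r2 : ℕ → ℝ := fun t => (1 / (t : ℝ)) *
      ((⨆ b : S2, ∑ τ ∈ Icc 1 t, -u (s1 τ, b)) - ∑ τ ∈ Icc 1 t, -u (s1 τ, s2 τ)) with hr2def
  have hr1bdd : ∀ t, r1 t ≤ 2 * M := by
    intro t
    rcases Nat.eq_zero_or_pos t with ht | ht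
    · subst ht; simp [hr1def]; positivity
    · have hA : (⨆ a : S1, ∑ τ ∈ Icc 1 t, u (a, s2 τ)) ≤ t * M :=
        ciSup_le fun a => (abs_le.1 (hsum_abs t _ fun τ => hu_abs _)).2
      have hC : -(t * M) ≤ ∑ τ ∈ Icc 1 t, u (s1 τ, s2 τ) :=
        (abs_le.1 (hsum_abs t _ fun τ => hu_abs _)).1
      have htpos : (0 : ℝ) < t := by exact_mod_cast ht
      rw [hr1def]
      simp only
      rw [div_mul_eq_mul_div, one_mul, div_le_iff₀ htpos]
      nlinarith
  have hr2bdd : ∀ t, r2 t ≤ 2 * M := by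
    intro t
    rcases Nat.eq_zero_or_pos t with ht | ht
    · subst ht; simp [hr2def]; positivity
    · have hA : (⨆ b : S2, ∑ τ ∈ Icc 1 t, -u (s1 τ, b)) ≤ t * M :=
        ciSup_le fun b => (abs_le.1 (hsum_abs t _ fun τ => by simpa using hu_abs (s1 τ, b))).2
      have hC : -(t * M) ≤ ∑ τ ∈ Icc 1 t, -u (s1 τ, s2 τ) :=
        (abs_le.1 (hsum_abs t _ fun τ => by simpa using hu_abs (s1 τ, s2 τ))).1
      have htpos : (0 : ℝ) < t := by exact_mod_cast ht
      rw [hr2def]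
      simp only
      rw [div_mul_eq_mul_div, one_mul, div_le_iff₀ htpos]
      nlinarith
  -- key inequality: g a ≤ h b for all a, b
  have key : ∀ (a : S1) (b : S2), g a ≤ h b := by
    intro a b
    -- limits of the empirical averages
    have hga : Tendsto (fun k => (1 / (φ k : ℝ)) * ∑ τ ∈ Icc 1 (φ k), u (a, s2 τ)) atTop
        (nhds (g a)) := by
      have := hlim2 (u.comp (ContinuousMap.prodMk (ContinuousMap.const S2 a)
        (ContinuousMap.id S2)))
      simpa [ContinuousMap.comp, hgdef] using this
    have hhb : Tendsto (fun k => (1 / (φ k : ℝ)) * ∑ τ ∈ Icc 1 (φ k), u (s1 τ, b)) atTop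
        (nhds (h b)) := by
      have := hlim1 (u.comp (ContinuousMap.prodMk (ContinuousMap.id S1)
        (ContinuousMap.const S1 b)))
      simpa [ContinuousMap.comp, hhdef] using this
    have hdiff : Tendsto (fun k => (1 / (φ k : ℝ)) * ∑ τ ∈ Icc 1 (φ k), u (a, s2 τ) -
        (1 / (φ k : ℝ)) * ∑ τ ∈ Icc 1 (φ k), u (s1 τ, b)) atTop (nhds (g a - h b)) :=
      hga.sub hhb
    -- pointwise bound by the regrets
    have hkey : ∀ k, (1 / (φ k : ℝ)) * ∑ τ ∈ Icc 1 (φ k), u (a, s2 τ) -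
        (1 / (φ k : ℝ)) * ∑ τ ∈ Icc 1 (φ k), u (s1 τ, b) ≤ r1 (φ k) + r2 (φ k) := by
      intro k
      set t := φ k with htdef
      have hpos : (0 : ℝ) ≤ 1 / (t : ℝ) := by positivity
      have h1 : (∑ τ ∈ Icc 1 t, u (a, s2 τ)) ≤ ⨆ a' : S1, ∑ τ ∈ Icc 1 t, u (a', s2 τ) :=
        le_ciSup (bddA t) a
      have h2 : (∑ τ ∈ Icc 1 t, -u (s1 τ, b)) ≤ ⨆ b' : S2, ∑ τ ∈ Icc 1 t, -u (s1 τ, b') :=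
        le_ciSup (bddB t) b
      have h1' := mul_le_mul_of_nonneg_left h1 hpos
      have h2' := mul_le_mul_of_nonneg_left h2 hpos
      have hnegsum : (∑ τ ∈ Icc 1 t, -u (s1 τ, b)) = -∑ τ ∈ Icc 1 t, u (s1 τ, b) := by
        simp
      have hnegsum2 : (∑ τ ∈ Icc 1 t, -u (s1 τ, s2 τ)) = -∑ τ ∈ Icc 1 t, u (s1 τ, s2 τ) := by
        simp
      rw [hnegsum] at h2'
      rw [hr1def, hr2def]
      simp only [hnegsum2]
      set P := ∑ τ ∈ Icc 1 t, u (a, s2 τ)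
      set Q := ∑ τ ∈ Icc 1 t, u (s1 τ, b)
      set A := ⨆ a' : S1, ∑ τ ∈ Icc 1 t, u (a', s2 τ)
      set B := ⨆ b' : S2, ∑ τ ∈ Icc 1 t, -u (s1 τ, b')
      set C := ∑ τ ∈ Icc 1 t, u (s1 τ, s2 τ)
      have expand : (1 / (t : ℝ)) * (A - C) + (1 / (t : ℝ)) * (B - -C) =
          (1 / (t : ℝ)) * A + (1 / (t : ℝ)) * B := by ring
      have hmn : (1 / (t : ℝ)) * -Q = -((1 / (t : ℝ)) * Q) := by ring
      rw [hmn] at h2'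
      linarith [expand.ge, expand.le]
    -- conclude g a ≤ h b
    rw [← sub_nonpos]
    refine le_of_forall_pos_le_add fun ε hε => ?_
    have hev1 : ∀ᶠ t in atTop, r1 t < ε / 2 :=
      eventually_lt_of_limsup_lt (lt_of_le_of_lt hreg1 (half_pos hε))
        (isBoundedUnder_of ⟨2 * M, hr1bdd⟩)
    have hev2 : ∀ᶠ t in atTop, r2 t < ε / 2 :=
      eventually_lt_of_limsup_lt (lt_of_le_of_lt hreg2 (half_pos hε))
        (isBoundedUnder_of ⟨2 * M, hr2bdd⟩)
    have hφt : Tendsto φ atTop atTop := hφ.tendsto_atTop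
    have hev : ∀ᶠ k in atTop, (1 / (φ k : ℝ)) * ∑ τ ∈ Icc 1 (φ k), u (a, s2 τ) -
        (1 / (φ k : ℝ)) * ∑ τ ∈ Icc 1 (φ k), u (s1 τ, b) ≤ 0 + ε := by
      filter_upwards [hφt.eventually hev1, hφt.eventually hev2] with k hk1 hk2
      have := hkey k
      linarith
    exact le_of_tendsto hdiff hev
  -- rewrite the mixed extensions
  haveI : ∀ a : S1, IsProbabilityMeasure (Measure.dirac a) := fun a => inferInstance
  have hg_int : ∀ (μ : Measure S1), IsProbabilityMeasure μ → Integrable g μ := by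
    intro μ hμ
    refine ⟨(u.continuous.stronglyMeasurable.integral_prod_right').aestronglyMeasurable, ?_⟩
    exact HasFiniteIntegral.of_bounded (C := M) (ae_of_all _ fun a => by
      simpa [Real.norm_eq_abs] using hg_abs a)
  have hh_int : ∀ (ν : Measure S2), IsProbabilityMeasure ν → Integrable h ν := by
    intro ν hν
    refine ⟨(u.continuous.stronglyMeasurable.integral_prod_left').aestronglyMeasurable, ?_⟩
    exact HasFiniteIntegral.of_bounded (C := M) (ae_of_all _ fun b => by
      simpa [Real.norm_eq_abs] using hh_abs b)
  have bddg : BddAbove (Set.range g) := ⟨M, by rintro _ ⟨a, rfl⟩; exact (abs_le.1 (hg_abs a)).2⟩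
  have bddh : BddBelow (Set.range h) := ⟨-M, by rintro _ ⟨b, rfl⟩; exact (abs_le.1 (hh_abs b)).1⟩
  -- E1 : sup over mixed strategies equals sup over pure strategies
  have hE1 : (⨆ x1 : ProbabilityMeasure S1,
      ∫ s, u s ∂((x1 : Measure S1).prod (z2 : Measure S2))) = ⨆ a, g a := by
    apply le_antisymm
    · apply ciSup_le
      intro x1
      have hfub := MeasureTheory.integral_prod (fun s => u s)
        (hint (x1 : Measure S1) (z2 : Measure S2) inferInstance inferInstance)
      rw [hfub]
      calc (∫ a, ∫ b, u (a, b) ∂(z2 : Measure S2) ∂(x1 : Measure S1))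
          ≤ ∫ _, (⨆ a', g a') ∂(x1 : Measure S1) := by
            refine integral_mono (hg_int (x1 : Measure S1) inferInstance) (integrable_const _) fun a => le_ciSup bddg a
        _ = ⨆ a', g a' := by simp
    · apply ciSup_le
      intro a
      have heq : g a = ∫ s, u s ∂(((⟨Measure.dirac a, inferInstance⟩ :
          ProbabilityMeasure S1) : Measure S1).prod (z2 : Measure S2)) := by
        have hfub := MeasureTheory.integral_prod (fun s => u s)
          (hint (((⟨Measure.dirac a, inferInstance⟩ : ProbabilityMeasure S1)) : Measure S1)
            (z2 : Measure S2) inferInstance inferInstance)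
        rw [hfub]
        simp only [ProbabilityMeasure.coe_mk]
        rw [integral_dirac]
      rw [heq]
      refine le_ciSup (f := fun x1 : ProbabilityMeasure S1 =>
        ∫ s, u s ∂((x1 : Measure S1).prod (z2 : Measure S2))) ?_ _
      refine ⟨M, ?_⟩
      rintro _ ⟨x1, rfl⟩
      exact (abs_le.1 (hbar_abs (x1 : Measure S1) (z2 : Measure S2) inferInstance inferInstance)).2
  -- E2 : inf over mixed strategies equals inf over pure strategies
  have hE2 : (⨅ x2 : ProbabilityMeasure S2,
      ∫ s, u s ∂((z1 : Measure S1).prod (x2 : Measure S2))) = ⨅ b, h b := by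
    apply le_antisymm
    · refine le_ciInf fun b => ?_
      have heq : (∫ s, u s ∂((z1 : Measure S1).prod (((⟨Measure.dirac b, inferInstance⟩ :
          ProbabilityMeasure S2)) : Measure S2))) = h b := by
        have hfub := MeasureTheory.integral_prod_symm (fun s => u s)
          (hint (z1 : Measure S1)
            (((⟨Measure.dirac b, inferInstance⟩ : ProbabilityMeasure S2)) : Measure S2)
            inferInstance inferInstance)
        rw [hfub]
        simp only [ProbabilityMeasure.coe_mk]
        rw [integral_dirac]
      refine ciInf_le_of_le ?_ (⟨Measure.dirac b, inferInstance⟩ : ProbabilityMeasure S2) heq.le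
      exact ⟨-M, by rintro _ ⟨x2, rfl⟩; exact (abs_le.1 (hbar_abs (z1 : Measure S1) (x2 : Measure S2) inferInstance inferInstance)).1⟩
    · refine le_ciInf fun x2 => ?_
      have hfub := MeasureTheory.integral_prod_symm (fun s => u s)
        (hint (z1 : Measure S1) (x2 : Measure S2) inferInstance inferInstance)
      rw [hfub]
      calc (⨅ b', h b') = ∫ _, (⨅ b', h b') ∂(x2 : Measure S2) := by simp
        _ ≤ ∫ b, ∫ a, u (a, b) ∂(z1 : Measure S1) ∂(x2 : Measure S2) :=
            integral_mono (integrable_const _) (hh_int (x2 : Measure S2) inferInstance) fun b => ciInf_le bddh b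
  have hmid : (⨆ a, g a) ≤ ⨅ b, h b := ciSup_le fun a => le_ciInf fun b => key a b
  have hVle : V ≤ ⨆ x1 : ProbabilityMeasure S1,
      ∫ s, u s ∂((x1 : Measure S1).prod (z2 : Measure S2)) := by
    rw [← hval₂]
    refine ciInf_le (f := fun x2 : ProbabilityMeasure S2 => ⨆ x1 : ProbabilityMeasure S1,
      ∫ s, u s ∂((x1 : Measure S1).prod (x2 : Measure S2))) ?_ z2
    refine ⟨-M, ?_⟩
    rintro _ ⟨x2, rfl⟩
    have hba : BddAbove (Set.range fun x1 : ProbabilityMeasure S1 =>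
        ∫ s, u s ∂((x1 : Measure S1).prod (x2 : Measure S2))) := by
      refine ⟨M, ?_⟩
      rintro _ ⟨x1, rfl⟩
      exact (abs_le.1 (hbar_abs (x1 : Measure S1) (x2 : Measure S2)
        inferInstance inferInstance)).2
    refine le_trans ?_ (le_ciSup hba (Classical.arbitrary _))
    exact (abs_le.1 (hbar_abs ((Classical.arbitrary (ProbabilityMeasure S1)) : Measure S1)
      (x2 : Measure S2) inferInstance inferInstance)).1
  have hleV : (⨅ x2 : ProbabilityMeasure S2,
      ∫ s, u s ∂((z1 : Measure S1).prod (x2 : Measure S2))) ≤ V := by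
    rw [← hval₁]
    refine le_ciSup (f := fun x1 : ProbabilityMeasure S1 => ⨅ x2 : ProbabilityMeasure S2,
      ∫ s, u s ∂((x1 : Measure S1).prod (x2 : Measure S2))) ?_ z1
    refine ⟨M, ?_⟩
    rintro _ ⟨x1, rfl⟩
    have hbb : BddBelow (Set.range fun x2 : ProbabilityMeasure S2 =>
        ∫ s, u s ∂((x1 : Measure S1).prod (x2 : Measure S2))) := by
      refine ⟨-M, ?_⟩
      rintro _ ⟨x2, rfl⟩
      exact (abs_le.1 (hbar_abs (x1 : Measure S1) (x2 : Measure S2)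
        inferInstance inferInstance)).1
    refine le_trans (ciInf_le hbb (Classical.arbitrary _)) ?_
    exact (abs_le.1 (hbar_abs (x1 : Measure S1)
      ((Classical.arbitrary (ProbabilityMeasure S2)) : Measure S2)
      inferInstance inferInstance)).2
  have hAB : (⨆ x1 : ProbabilityMeasure S1,
      ∫ s, u s ∂((x1 : Measure S1).prod (z2 : Measure S2))) ≤
      ⨅ x2 : ProbabilityMeasure S2,
      ∫ s, u s ∂((z1 : Measure S1).prod (x2 : Measure S2)) := by
    rw [hE1, hE2]; exact hmid
  constructor
  · linarith
  · linarith
end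

section
/- (Continuous-time Dual Averaging regret bound.) Let X be a reflexive real Banach space with dual X* and pairing ⟨x, ξ⟩ := ξ(x). Let h : X → ℝ ∪ {+∞} be proper with effective domain 𝒳 and h̲ := inf_{x∈X} h(x) ∈ ℝ, and suppose its conjugate h*(ξ) := sup_{x∈X} (⟨x, ξ⟩ − h(x)) is finite and Fréchet differentiable on X*, with Fréchet derivative Dh*(ξ) ∈ 𝒳 equal to the unique maximizer of x ↦ ⟨x, ξ⟩ − h(x), and with Dh* norm-continuous. Let u^c : [0,∞) → X* be locally Bochner integrable with sup_{x∈𝒳} |⟨u^c_t, x⟩| ≤ M < ∞ for all t, and let η^c : [0,∞) → (0,∞) be continuously differentiable and nonincreasing. Define x^c_t := Dh*( η^c_t · ∫_0^t u^c_τ dτ ). Then for every x ∈ X and every t ≥ 0: ∫_0^t ⟨u^c_τ, x⟩ dτ − ∫_0^t ⟨u^c_τ, x^c_τ⟩ dτ ≤ (h(x) − h̲)/η^c_t. -/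
open MeasureTheory intervalIntegral NormedSpace

set_option maxHeartbeats 1000000 in
/-- **Continuous-time Dual Averaging regret bound.**
`X` is a reflexive real Banach space (the canonical embedding into the double dual is
surjective), `h : X → ℝ ∪ {+∞}` is proper with `h̲ = inf h ∈ ℝ`, its conjugate
`h*(ξ) = sup_x (⟨x,ξ⟩ - h(x))` is finite everywhere, Fréchet differentiable with
derivative `Dh*(ξ) = g(ξ)` (the unique maximizer, lying in `dom h`), and `g` is
norm-continuous. For a locally Bochner integrable reward path `u^c` with
`sup_{x ∈ 𝒳} |⟨u^c_t, x⟩| ≤ M` and a positive nonincreasing `C¹` learning-rate path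
`η^c` on `[0,∞)`, the trajectory `x^c_t = g(η^c_t ∫_0^t u^c_τ dτ)` satisfies, for every
`x ∈ X` (with `h(x)` finite) and `t ≥ 0`:
`∫_0^t ⟨u^c_τ, x⟩ dτ - ∫_0^t ⟨u^c_τ, x^c_τ⟩ dτ ≤ (h(x) - h̲)/η^c_t`. -/
theorem stmt18 {X : Type*} [NormedAddCommGroup X] [NormedSpace ℝ X] [CompleteSpace X]
    (hrefl : Function.Surjective (inclusionInDoubleDual ℝ X))
    (h : X → EReal) (hproper₁ : ∀ y : X, h y ≠ ⊥) (hproper₂ : ∃ y : X, h y ≠ ⊤)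
    (hbar : ℝ) (hbar_inf : (⨅ y : X, h y) = (hbar : EReal))
    -- the conjugate `h*` is finite everywhere, with (unique) maximizer `g ξ ∈ dom h`
    (hstar : StrongDual ℝ X → ℝ)
    (hstar_eq : ∀ ξ : StrongDual ℝ X,
      ((hstar ξ : ℝ) : EReal) = ⨆ y : X, (((ξ y : ℝ) : EReal) - h y))
    (g : StrongDual ℝ X → X)
    (hgdom : ∀ ξ : StrongDual ℝ X, h (g ξ) ≠ ⊤)
    (hgmax : ∀ ξ : StrongDual ℝ X, ((ξ (g ξ) : ℝ) : EReal) - h (g ξ) = (hstar ξ : EReal))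
    (hguniq : ∀ (ξ : StrongDual ℝ X) (y : X),
      (((ξ y : ℝ) : EReal) - h y = (hstar ξ : EReal)) → y = g ξ)
    -- `h*` is Fréchet differentiable with derivative `Dh*(ξ) = g ξ`, norm-continuous
    (hfdiff : ∀ ξ : StrongDual ℝ X,
      HasFDerivAt hstar (inclusionInDoubleDual ℝ X (g ξ)) ξ)
    (hgcont : Continuous g)
    -- the reward path: locally Bochner integrable, bounded on `𝒳 = dom h`
    (u : ℝ → StrongDual ℝ X) (hu : LocallyIntegrable u volume)
    (M : ℝ)
    (huM : ∀ (t : ℝ) (y : X), h y ≠ ⊤ → |u t y| ≤ M)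
    -- the learning-rate path: positive, nonincreasing, continuously differentiable
    (η : ℝ → ℝ) (hηpos : ∀ t : ℝ, 0 ≤ t → 0 < η t)
    (hηmono : AntitoneOn η (Set.Ici 0)) (hηC1 : ContDiffOn ℝ 1 η (Set.Ici 0))
    -- the continuous-time Dual Averaging trajectory
    (xc : ℝ → X)
    (hxc : ∀ t : ℝ, xc t = g ((η t) • ∫ τ in (0:ℝ)..t, u τ)) :
    ∀ (x : X) (c : ℝ), h x = (c : EReal) → ∀ t : ℝ, 0 ≤ t →
      (∫ τ in (0:ℝ)..t, u τ x) - (∫ τ in (0:ℝ)..t, u τ (xc τ)) ≤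
        (c - hbar) / η t := by
  -- Fenchel–Young inequality
  have FY : ∀ (ξ : StrongDual ℝ X) (y : X) (d : ℝ), h y = (d : EReal) → ξ y - d ≤ hstar ξ := by
    intro ξ y d hd
    have h1 : (((ξ y : ℝ) : EReal) - h y) ≤ ⨆ z : X, (((ξ z : ℝ) : EReal) - h z) :=
      le_iSup (fun z : X => (((ξ z : ℝ) : EReal) - h z)) y
    rw [← hstar_eq ξ, hd, ← EReal.coe_sub] at h1
    exact EReal.coe_le_coe_iff.1 h1
  -- value of h at the maximizer
  have Hg : ∀ ξ : StrongDual ℝ X, h (g ξ) = ((ξ (g ξ) - hstar ξ : ℝ) : EReal) := by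
    intro ξ
    have h2 : (((h (g ξ)).toReal : ℝ) : EReal) = h (g ξ) :=
      EReal.coe_toReal (hgdom ξ) (hproper₁ _)
    have h1 := hgmax ξ
    rw [← h2, ← EReal.coe_sub] at h1
    have h3 := EReal.coe_eq_coe_iff.1 h1
    rw [← h2]
    norm_cast
    linarith
  have HgB : ∀ ξ : StrongDual ℝ X, hbar ≤ ξ (g ξ) - hstar ξ := by
    intro ξ
    have h1 : (hbar : EReal) ≤ h (g ξ) := by
      rw [← hbar_inf]; exact iInf_le _ (g ξ)
    rw [Hg ξ] at h1
    exact EReal.coe_le_coe_iff.1 h1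
  -- gradient inequality for the convex function hstar
  have grad : ∀ ξ ζ : StrongDual ℝ X, hstar ζ ≤ hstar ξ + (ζ - ξ) (g ζ) := by
    intro ξ ζ
    have h1 := FY ξ (g ζ) (ζ (g ζ) - hstar ζ) (Hg ζ)
    have h2 : (ζ - ξ) (g ζ) = ζ (g ζ) - ξ (g ζ) := ContinuousLinearMap.sub_apply ζ ξ (g ζ)
    linarith
  intro x c hc t ht
  -- the primitive of the reward path and the dual variable
  set U : ℝ → StrongDual ℝ X := fun s => ∫ τ in (0:ℝ)..s, u τ with hU
  set ξf : ℝ → StrongDual ℝ X := fun s => η s • U s with hξf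
  have hxc' : ∀ s : ℝ, xc s = g (ξf s) := hxc
  have hUi : ∀ a b : ℝ, IntervalIntegrable u volume a b := fun a b =>
    (hu.integrableOn_isCompact isCompact_uIcc).intervalIntegrable
  have hUcont : Continuous U := intervalIntegral.continuous_primitive hUi 0
  have hηcont : ContinuousOn η (Set.Ici 0) := hηC1.continuousOn
  have hIccIci : Set.Icc (0:ℝ) t ⊆ Set.Ici 0 := fun z hz => hz.1
  have hξcont : ContinuousOn ξf (Set.Icc 0 t) :=
    (hηcont.mono hIccIci).smul hUcont.continuousOn
  have hxccont : ContinuousOn xc (Set.Icc 0 t) := by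
    have : xc = fun s => g (ξf s) := funext hxc'
    rw [this]
    exact hgcont.comp_continuousOn hξcont
  -- bounds on compact [0, t]
  obtain ⟨K, hK⟩ := isCompact_Icc.exists_bound_of_continuousOn hξcont
  have hK0 : 0 ≤ K := le_trans (norm_nonneg _) (hK 0 ⟨le_refl 0, ht⟩)
  obtain ⟨B, hB⟩ := isCompact_Icc.exists_bound_of_continuousOn hxccont
  -- integrability of τ ↦ u τ (xc τ) on [0, t]
  have hw_meas : AEStronglyMeasurable (fun τ => u τ (xc τ))
      (volume.restrict (Set.Icc (0:ℝ) t)) := by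
    apply Continuous.comp_aestronglyMeasurable₂ (g := fun (L : StrongDual ℝ X) (v : X) => L v)
    · exact isBoundedBilinearMap_apply.continuous
    · exact (hu.integrableOn_isCompact isCompact_Icc).aestronglyMeasurable
    · exact hxccont.aestronglyMeasurable measurableSet_Icc
  have hwInt : IntegrableOn (fun τ => u τ (xc τ)) (Set.Icc (0:ℝ) t) volume := by
    apply Integrable.mono' (((hu.integrableOn_isCompact isCompact_Icc).norm).mul_const B) hw_meas
    filter_upwards [ae_restrict_mem measurableSet_Icc] with τ hτ
    calc ‖u τ (xc τ)‖ ≤ ‖u τ‖ * ‖xc τ‖ := (u τ).le_opNorm _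
      _ ≤ ‖u τ‖ * B := mul_le_mul_of_nonneg_left (hB τ hτ) (norm_nonneg _)
  have hwi : ∀ s r : ℝ, s ∈ Set.Icc (0:ℝ) t → r ∈ Set.Icc (0:ℝ) t →
      IntervalIntegrable (fun τ => u τ (xc τ)) volume s r := by
    intro s r hs hr
    exact (hwInt.mono_set (Set.uIcc_subset_Icc hs hr)).intervalIntegrable
  -- integrability of τ ↦ u τ y for fixed y
  have hui_y : ∀ (y : X) (s r : ℝ), IntervalIntegrable (fun τ => u τ y) volume s r := by
    intro y s r
    have h1 := hUi s r
    exact ⟨(ContinuousLinearMap.apply ℝ ℝ y).integrable_comp h1.1,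
      (ContinuousLinearMap.apply ℝ ℝ y).integrable_comp h1.2⟩
  -- main estimate: (hstar (ξf t) + hbar) / η t ≤ ∫_0^t u_τ(xc τ)
  have hηt : 0 < η t := hηpos t ht
  have hη0 : 0 < η 0 := hηpos 0 le_rfl
  have hJ0 : 0 ≤ ∫ τ in (0:ℝ)..t, ‖u τ‖ :=
    intervalIntegral.integral_nonneg ht (fun τ _ => norm_nonneg _)
  have hΔ0 : 0 ≤ 1 / η t - 1 / η 0 := by
    have := hηmono (Set.mem_Ici.2 le_rfl) (Set.mem_Ici.2 ht) ht
    have := one_div_le_one_div_of_le hηt this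
    linarith
  set D : ℝ := (∫ τ in (0:ℝ)..t, ‖u τ‖) + K * (1 / η t - 1 / η 0) with hD
  have hD0 : 0 ≤ D := by positivity
  have main : (hstar (ξf t) + hbar) / η t ≤ ∫ τ in (0:ℝ)..t, u τ (xc τ) := by
    refine le_of_forall_pos_le_add ?_
    intro ε hε
    have hD1 : (0:ℝ) < D + 1 := by linarith
    set ε' : ℝ := ε / (D + 1) with hε'def
    have hε' : 0 < ε' := div_pos hε hD1
    -- uniform continuity of xc on [0, t]
    have hucont := isCompact_Icc.uniformContinuousOn_of_continuous hxccont
    rw [Metric.uniformContinuousOn_iff] at hucont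
    obtain ⟨δ, hδ, hδ'⟩ := hucont ε' hε'
    obtain ⟨n, hn⟩ := exists_nat_gt (t / δ)
    have hn0 : (0:ℝ) < n := lt_of_le_of_lt (div_nonneg ht hδ.le) hn
    have htn : t / n < δ := by
      rw [div_lt_iff₀ hn0]
      rw [div_lt_iff₀ hδ] at hn
      linarith [hn]
    -- the uniform partition
    set p : ℕ → ℝ := fun i => (i : ℝ) * t / n with hp
    have hp0 : p 0 = 0 := by simp [hp]
    have hpn : p n = t := by show (n:ℝ) * t / n = t; exact mul_div_cancel_left₀ t hn0.ne'
    have hpmem : ∀ i : ℕ, i ≤ n → p i ∈ Set.Icc (0:ℝ) t := by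
      intro i hi
      constructor
      · positivity
      · rw [hp]
        rw [div_le_iff₀ hn0]
        have : (i : ℝ) ≤ n := Nat.cast_le.2 hi
        nlinarith
    have hpstep : ∀ i : ℕ, p (i + 1) - p i = t / n := by
      intro i
      simp only [hp, Nat.cast_add, Nat.cast_one]
      ring
    have hpmono : ∀ i : ℕ, p i ≤ p (i + 1) := by
      intro i
      have := hpstep i
      have : 0 ≤ t / n := by positivity
      linarith [hpstep i]
    set G : ℝ → ℝ := fun s => (hstar (ξf s) + hbar) / η s with hG
    -- the per-step inequality
    have step : ∀ i ∈ Finset.range n, G (p (i + 1)) - G (p i) ≤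
        (∫ τ in p i..p (i + 1), u τ (xc τ)) + ε' * (∫ τ in p i..p (i + 1), ‖u τ‖)
          + (ε' * K) * (1 / η (p (i + 1)) - 1 / η (p i)) := by
      intro i hi
      have hin : i < n := Finset.mem_range.1 hi
      set s : ℝ := p i with hs
      set r : ℝ := p (i + 1) with hr
      have hsmem : s ∈ Set.Icc (0:ℝ) t := hpmem i hin.le
      have hrmem : r ∈ Set.Icc (0:ℝ) t := hpmem (i + 1) hin
      have hs0 : 0 ≤ s := hsmem.1
      have hr0 : 0 ≤ r := hrmem.1
      have hrt : r ≤ t := hrmem.2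
      have hsr : s ≤ r := hpmono i
      have hrs : r - s = t / n := hpstep i
      have hηs : 0 < η s := hηpos s hs0
      have hηr : 0 < η r := hηpos r hr0
      have hηrs : η r ≤ η s := hηmono (Set.mem_Ici.2 hs0) (Set.mem_Ici.2 hr0) hsr
      have ha : 0 ≤ 1 / η r - 1 / η s := by
        have := one_div_le_one_div_of_le hηr hηrs
        linarith
      -- points of [s, r] are ε'-close to r under xc
      have hclose : ∀ τ ∈ Set.Icc s r, ‖xc r - xc τ‖ ≤ ε' := by
        intro τ hτ
        have hτmem : τ ∈ Set.Icc (0:ℝ) t := ⟨le_trans hs0 hτ.1, le_trans hτ.2 hrt⟩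
        have hd : dist r τ < δ := by
          rw [Real.dist_eq, abs_of_nonneg (by linarith [hτ.2] : (0:ℝ) ≤ r - τ)]
          have : r - τ ≤ t / n := by linarith [hτ.1]
          linarith
        have := hδ' r hrmem τ hτmem hd
        rw [dist_eq_norm] at this
        exact this.le
      -- integral comparison
      have int_w : IntervalIntegrable (fun τ => u τ (xc τ)) volume s r := hwi s r hsmem hrmem
      have int_nu : IntervalIntegrable (fun τ => ‖u τ‖) volume s r := (hUi s r).norm
      have h4 : (∫ τ in s..r, u τ (xc r)) ≤
          (∫ τ in s..r, u τ (xc τ)) + ε' * (∫ τ in s..r, ‖u τ‖) := by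
        have hmono : (∫ τ in s..r, u τ (xc r)) ≤
            ∫ τ in s..r, (u τ (xc τ) + ε' * ‖u τ‖) := by
          apply intervalIntegral.integral_mono_on hsr (hui_y (xc r) s r)
            (int_w.add (int_nu.const_mul ε'))
          intro τ hτ
          have e1 : u τ (xc r) - u τ (xc τ) = u τ (xc r - xc τ) := by
            rw [map_sub]
          have e2 : u τ (xc r - xc τ) ≤ ‖u τ‖ * ‖xc r - xc τ‖ := by
            calc u τ (xc r - xc τ) ≤ ‖u τ (xc r - xc τ)‖ := le_abs_self _
              _ ≤ ‖u τ‖ * ‖xc r - xc τ‖ := (u τ).le_opNorm _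
          have e3 : ‖u τ‖ * ‖xc r - xc τ‖ ≤ ‖u τ‖ * ε' :=
            mul_le_mul_of_nonneg_left (hclose τ hτ) (norm_nonneg _)
          have : u τ (xc r) - u τ (xc τ) ≤ ε' * ‖u τ‖ := by
            rw [e1]; calc u τ (xc r - xc τ) ≤ ‖u τ‖ * ε' := le_trans e2 e3
              _ = ε' * ‖u τ‖ := mul_comm _ _
          linarith
        rwa [intervalIntegral.integral_add int_w (int_nu.const_mul ε'),
          intervalIntegral.integral_const_mul] at hmono
      -- the "entropy" error term
      have h5 : hstar (ξf s) - (ξf s) (xc r) + hbar ≤ K * ε' := by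
        have hgb := HgB (ξf s)
        rw [← hxc' s] at hgb
        have hcl : ‖xc s - xc r‖ ≤ ε' := by
          rw [norm_sub_rev]
          exact hclose s ⟨le_rfl, hsr⟩
        have e1 : (ξf s) (xc s) - (ξf s) (xc r) = (ξf s) (xc s - xc r) := by rw [map_sub]
        have e2 : (ξf s) (xc s - xc r) ≤ ‖ξf s‖ * ‖xc s - xc r‖ :=
          le_trans (le_abs_self _) ((ξf s).le_opNorm _)
        have e3 : ‖ξf s‖ * ‖xc s - xc r‖ ≤ K * ε' :=
          mul_le_mul (hK s hsmem) hcl (norm_nonneg _) hK0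
        linarith
      -- gradient inequality
      have h1 : hstar (ξf r) ≤ hstar (ξf s) + (ξf r - ξf s) (xc r) := by
        have := grad (ξf s) (ξf r)
        rwa [← hxc' r] at this
      -- expand the pairing
      set Ury : ℝ := U r (xc r) with hUry
      set Usy : ℝ := U s (xc r) with hUsy
      have h2 : (ξf r - ξf s) (xc r) = η r * Ury - η s * Usy := by
        simp [hξf, ContinuousLinearMap.sub_apply, ContinuousLinearMap.smul_apply,
          smul_eq_mul, hUry, hUsy]
      have hPr : (ξf s) (xc r) = η s * Usy := by
        simp [hξf, ContinuousLinearMap.smul_apply, smul_eq_mul, hUsy]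
      have h3 : Ury - Usy = ∫ τ in s..r, u τ (xc r) := by
        have hadd : U s + (∫ τ in s..r, u τ) = U r :=
          intervalIntegral.integral_add_adjacent_intervals (hUi 0 s) (hUi s r)
        have happ : Usy + (∫ τ in s..r, u τ) (xc r) = Ury := by
          rw [hUry, hUsy, ← hadd]
          simp [ContinuousLinearMap.add_apply]
        have hIa : (∫ τ in s..r, u τ) (xc r) = ∫ τ in s..r, u τ (xc r) :=
          ContinuousLinearMap.intervalIntegral_apply (hUi s r) (xc r)
        linarith [happ, hIa.le, hIa.ge]
      -- put everything together
      have hηr' : η r ≠ 0 := ne_of_gt hηr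
      have hηs' : η s ≠ 0 := ne_of_gt hηs
      set A : ℝ := hstar (ξf s) with hA
      have key_eq : (A + hbar + (η r * Ury - η s * Usy)) / η r - (A + hbar) / η s
          = (Ury - Usy) + (A + hbar - η s * Usy) * (1 / η r - 1 / η s) := by
        field_simp
        ring
      have hGr : G r = (hstar (ξf r) + hbar) / η r := rfl
      have hGs : G s = (A + hbar) / η s := rfl
      have step1 : G r - G s ≤ (A + hbar + (η r * Ury - η s * Usy)) / η r - (A + hbar) / η s := by
        rw [hGr, hGs]
        have hnum : hstar (ξf r) + hbar ≤ A + hbar + (η r * Ury - η s * Usy) := by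
          rw [← h2]; linarith [h1]
        exact sub_le_sub_right ((div_le_div_iff_of_pos_right hηr).2 hnum) _
      have step2 : (Ury - Usy) + (A + hbar - η s * Usy) * (1 / η r - 1 / η s) ≤
          ((∫ τ in s..r, u τ (xc τ)) + ε' * (∫ τ in s..r, ‖u τ‖))
            + (ε' * K) * (1 / η r - 1 / η s) := by
        have t1 : Ury - Usy ≤ (∫ τ in s..r, u τ (xc τ)) + ε' * (∫ τ in s..r, ‖u τ‖) := by
          rw [h3]; exact h4
        have t2 : (A + hbar - η s * Usy) * (1 / η r - 1 / η s)
            ≤ (ε' * K) * (1 / η r - 1 / η s) := by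
          apply mul_le_mul_of_nonneg_right _ ha
          rw [mul_comm]
          rw [hA]
          linarith [h5, hPr.le, hPr.ge]
        linarith
      calc G r - G s ≤ (A + hbar + (η r * Ury - η s * Usy)) / η r - (A + hbar) / η s := step1
        _ = (Ury - Usy) + (A + hbar - η s * Usy) * (1 / η r - 1 / η s) := key_eq
        _ ≤ ((∫ τ in s..r, u τ (xc τ)) + ε' * (∫ τ in s..r, ‖u τ‖))
            + (ε' * K) * (1 / η r - 1 / η s) := step2
    -- telescoping
    have tele : G t - G 0 ≤ (∫ τ in (0:ℝ)..t, u τ (xc τ))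
        + ε' * (∫ τ in (0:ℝ)..t, ‖u τ‖) + (ε' * K) * (1 / η t - 1 / η 0) := by
      have e1 : G t - G 0 = ∑ i ∈ Finset.range n, (G (p (i + 1)) - G (p i)) := by
        rw [Finset.sum_range_sub (fun i => G (p i)) n, hp0, hpn]
      rw [e1]
      calc ∑ i ∈ Finset.range n, (G (p (i + 1)) - G (p i))
          ≤ ∑ i ∈ Finset.range n, ((∫ τ in p i..p (i + 1), u τ (xc τ))
            + ε' * (∫ τ in p i..p (i + 1), ‖u τ‖)
            + (ε' * K) * (1 / η (p (i + 1)) - 1 / η (p i))) := Finset.sum_le_sum step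
        _ = (∫ τ in (0:ℝ)..t, u τ (xc τ)) + ε' * (∫ τ in (0:ℝ)..t, ‖u τ‖)
            + (ε' * K) * (1 / η t - 1 / η 0) := by
          rw [Finset.sum_add_distrib, Finset.sum_add_distrib]
          congr 1
          · congr 1
            · rw [intervalIntegral.sum_integral_adjacent_intervals
                (fun i hi => hwi (p i) (p (i+1)) (hpmem i (le_of_lt hi))
                  (hpmem (i+1) hi)), hp0, hpn]
            · rw [← Finset.mul_sum, intervalIntegral.sum_integral_adjacent_intervals
                (fun i hi => (hUi (p i) (p (i+1))).norm), hp0, hpn]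
          · rw [← Finset.mul_sum, Finset.sum_range_sub (fun i => 1 / η (p i)) n, hp0, hpn]
      done
    -- G 0 ≤ 0
    have hG0 : G 0 ≤ 0 := by
      have hξ0 : ξf 0 = 0 := by
        simp [hξf, hU, intervalIntegral.integral_same]
      have := HgB (0 : StrongDual ℝ X)
      rw [ContinuousLinearMap.zero_apply] at this
      show (hstar (ξf 0) + hbar) / η 0 ≤ 0
      rw [hξ0]
      apply div_nonpos_of_nonpos_of_nonneg _ hη0.le
      linarith
    have hεD : ε' * (∫ τ in (0:ℝ)..t, ‖u τ‖) + (ε' * K) * (1 / η t - 1 / η 0) ≤ ε := by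
      have e2 : ε' * (∫ τ in (0:ℝ)..t, ‖u τ‖) + (ε' * K) * (1 / η t - 1 / η 0)
          = ε' * D := by rw [hD]; ring
      rw [e2]
      calc ε' * D ≤ ε' * (D + 1) := mul_le_mul_of_nonneg_left (by linarith) hε'.le
        _ = ε := by rw [hε'def]; exact div_mul_cancel₀ ε (ne_of_gt hD1)
    have hGt : G t = (hstar (ξf t) + hbar) / η t := rfl
    linarith [tele, hG0, hεD, hGt.le, hGt.ge]
  -- conclude via Fenchel–Young at ξf t
  have hFY := FY (ξf t) x c hc
  have hev : (ξf t) x = η t * (U t x) := by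
    simp [hξf, ContinuousLinearMap.smul_apply, smul_eq_mul]
  have hUtx : U t x = ∫ τ in (0:ℝ)..t, u τ x :=
    ContinuousLinearMap.intervalIntegral_apply (hUi 0 t) x
  have hux_le : (∫ τ in (0:ℝ)..t, u τ x) ≤ (hstar (ξf t) + c) / η t := by
    rw [le_div_iff₀ hηt]
    rw [hev, hUtx] at hFY
    linarith
  have hsplit : (hstar (ξf t) + c) / η t
      = (hstar (ξf t) + hbar) / η t + (c - hbar) / η t := by
    field_simp
    ring
  linarith [main, hux_le, hsplit.ge, hsplit.le]
end
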